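/- arXiv:1508.00713 — 6 statements merged into one kernel-verified Lean document; each statement's English description precedes it below -/
import Mathlib

section
/- If λ > cT(1+T), then for fixed X in H and t in [0,T] the cost functional J_{X,t} is strictly convex; more precisely, for all controls v₁(.), v₂(.) in L²(t,T;H) and all θ ∈ [0,1], J_{X,t}(θv₁(.)+(1−θ)v₂(.)) ≤ θ J_{X,t}(v₁(.)) + (1−θ) J_{X,t}(v₂(.)) − (θ(1−θ)/2)(λ − cT(1+T)) ∫_t^T ||v₁(s)−v₂(s)||² ds. -/
open MeasureTheory Set
open scoped RealInnerProductSpace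

variable {H : Type*} [NormedAddCommGroup H] [InnerProductSpace ℝ H] [CompleteSpace H]

private lemma lip_cont {g : H → H} {c : ℝ} (hg : ∀ x y : H, ‖g x - g y‖ ≤ c * ‖x - y‖) :
    Continuous g := by
  refine (LipschitzWith.of_dist_le_mul (K := c.toNNReal) (f := g) ?_).continuous
  intro x y
  rw [dist_eq_norm, dist_eq_norm]
  calc ‖g x - g y‖ ≤ c * ‖x - y‖ := hg x y
    _ ≤ c.toNNReal * ‖x - y‖ := by
        apply mul_le_mul_of_nonneg_right _ (norm_nonneg _)
        rw [Real.coe_toNNReal']; exact le_max_left _ _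

private lemma taylor_abs {f : H → ℝ} {g : H → H} {c : ℝ}
    (hf : ∀ x, HasGradientAt f (g x) x)
    (hg : ∀ x y : H, ‖g x - g y‖ ≤ c * ‖x - y‖) (x y : H) :
    |f y - f x - ⟪g x, y - x⟫| ≤ c / 2 * ‖y - x‖ ^ 2 := by
  have hgc : Continuous g := lip_cont hg
  set γ : ℝ → H := fun τ => x + τ • (y - x) with hγ
  have hγc : Continuous γ := by fun_prop
  have hφ : ∀ τ : ℝ, HasDerivAt (fun τ => f (γ τ)) ⟪g (γ τ), y - x⟫ τ := by
    intro τ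
    have h1 : HasDerivAt γ (y - x) τ := by
      simpa [hγ] using ((hasDerivAt_id τ).smul_const (y - x)).const_add x
    have h2 := (hasGradientAt_iff_hasFDerivAt.mp (hf (γ τ))).comp_hasDerivAt τ h1
    simpa [InnerProductSpace.toDual_apply_apply, Function.comp_def] using h2
  have hcont : Continuous fun τ : ℝ => ⟪g (γ τ), y - x⟫ :=
    (hgc.comp hγc).inner continuous_const
  have key : ∫ τ in (0:ℝ)..1, ⟪g (γ τ), y - x⟫ = f y - f x := by
    have := intervalIntegral.integral_eq_sub_of_hasDerivAt
      (f := fun τ => f (γ τ)) (f' := fun τ => ⟪g (γ τ), y - x⟫)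
      (fun τ _ => hφ τ) (hcont.intervalIntegrable 0 1)
    simpa [hγ] using this
  have e1 : f y - f x - ⟪g x, y - x⟫
      = ∫ τ in (0:ℝ)..1, (⟪g (γ τ), y - x⟫ - ⟪g x, y - x⟫) := by
    rw [intervalIntegral.integral_sub (hcont.intervalIntegrable 0 1)
      (intervalIntegrable_const), key, intervalIntegral.integral_const]
    simp
  rw [e1]
  have h2 : |∫ τ in (0:ℝ)..1, (⟪g (γ τ), y - x⟫ - ⟪g x, y - x⟫)|
      ≤ ∫ τ in (0:ℝ)..1, |⟪g (γ τ), y - x⟫ - ⟪g x, y - x⟫| :=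
    intervalIntegral.abs_integral_le_integral_abs (by norm_num)
  have h3 : ∫ τ in (0:ℝ)..1, |⟪g (γ τ), y - x⟫ - ⟪g x, y - x⟫|
      ≤ ∫ τ in (0:ℝ)..1, (c * ‖y - x‖ ^ 2) * τ := by
    apply intervalIntegral.integral_mono_on (by norm_num)
      ((hcont.sub continuous_const).abs.intervalIntegrable 0 1)
      ((continuous_const.mul continuous_id).intervalIntegrable 0 1)
    intro τ hτ
    have e2 : ⟪g (γ τ), y - x⟫ - ⟪g x, y - x⟫ = ⟪g (γ τ) - g x, y - x⟫ := by
      rw [inner_sub_left]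
    show |⟪g (γ τ), y - x⟫ - ⟪g x, y - x⟫| ≤ (c * ‖y - x‖ ^ 2) * τ
    rw [e2]
    calc |⟪g (γ τ) - g x, y - x⟫| ≤ ‖g (γ τ) - g x‖ * ‖y - x‖ := abs_real_inner_le_norm _ _
      _ ≤ (c * ‖γ τ - x‖) * ‖y - x‖ := mul_le_mul_of_nonneg_right (hg _ _) (norm_nonneg _)
      _ = (c * ‖y - x‖ ^ 2) * τ := by
          have : γ τ - x = τ • (y - x) := by simp [hγ]
          rw [this, norm_smul, Real.norm_eq_abs, abs_of_nonneg hτ.1]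
          ring
  have h4 : ∫ τ in (0:ℝ)..1, (c * ‖y - x‖ ^ 2) * τ = c / 2 * ‖y - x‖ ^ 2 := by
    rw [intervalIntegral.integral_const_mul, integral_id]
    ring
  linarith

private lemma semiconvex {f : H → ℝ} {g : H → H} {c : ℝ}
    (hf : ∀ x, HasGradientAt f (g x) x)
    (hg : ∀ x y : H, ‖g x - g y‖ ≤ c * ‖x - y‖)
    {θ : ℝ} (h0 : 0 ≤ θ) (h1 : θ ≤ 1) (a b : H) :
    f (θ • a + (1 - θ) • b) ≤ θ * f a + (1 - θ) * f b + c / 2 * (θ * (1 - θ)) * ‖a - b‖ ^ 2 := by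
  set m := θ • a + (1 - θ) • b with hm
  have ham : a - m = (1 - θ) • (a - b) := by
    rw [hm]; module
  have hbm : b - m = (-θ) • (a - b) := by
    rw [hm]; module
  have ha := (abs_le.mp (taylor_abs hf hg m a)).1
  have hb := (abs_le.mp (taylor_abs hf hg m b)).1
  rw [ham] at ha
  rw [hbm] at hb
  rw [real_inner_smul_right, norm_smul, Real.norm_eq_abs, abs_of_nonneg (by linarith),
    mul_pow] at ha
  rw [real_inner_smul_right, norm_smul, Real.norm_eq_abs, abs_of_nonpos (by linarith),
    mul_pow] at hb
  nlinarith [mul_le_mul_of_nonneg_left ha h0, mul_le_mul_of_nonneg_left hb (by linarith : (0:ℝ) ≤ 1 - θ)]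

private lemma norm_combo (θ : ℝ) (a b : H) :
    ‖θ • a + (1 - θ) • b‖ ^ 2
      = θ * ‖a‖ ^ 2 + (1 - θ) * ‖b‖ ^ 2 - θ * (1 - θ) * ‖a - b‖ ^ 2 := by
  simp only [← real_inner_self_eq_norm_sq]
  simp only [inner_add_left, inner_add_right, inner_sub_left, inner_sub_right,
    real_inner_smul_left, real_inner_smul_right]
  rw [real_inner_comm b a]
  ring

private lemma cs_aux {w : ℝ → H} {t s : ℝ} (hts : t ≤ s)
    (hw : IntervalIntegrable (fun σ => ‖w σ‖) volume t s)
    (hw2 : IntervalIntegrable (fun σ => ‖w σ‖ ^ 2) volume t s) :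
    (∫ σ in t..s, ‖w σ‖) ^ 2 ≤ (s - t) * ∫ σ in t..s, ‖w σ‖ ^ 2 := by
  set A := ∫ σ in t..s, ‖w σ‖ with hA'
  set B := ∫ σ in t..s, ‖w σ‖ ^ 2 with hB'
  have hA : 0 ≤ A := intervalIntegral.integral_nonneg hts fun _ _ => norm_nonneg _
  have hB : 0 ≤ B := intervalIntegral.integral_nonneg hts fun _ _ => sq_nonneg _
  rcases eq_or_lt_of_le hts with h | h
  · subst h
    have hA0 : A = 0 := by rw [hA', intervalIntegral.integral_same]
    rw [hA0]
    simp
  · have hst : 0 < s - t := by linarith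
    have key : ∀ r : ℝ, 0 < r → A ≤ (s - t) * (r / 2) + B / (2 * r) := by
      intro r hr
      have h2r : (0:ℝ) < 2 * r := by linarith
      have step : A ≤ ∫ σ in t..s, (r / 2 + ‖w σ‖ ^ 2 / (2 * r)) := by
        apply intervalIntegral.integral_mono_on hts hw
          (intervalIntegrable_const.add (hw2.div_const (2 * r)))
        intro x _
        rw [← sub_le_iff_le_add', le_div_iff₀ h2r]
        nlinarith [sq_nonneg (‖w x‖ - r)]
      rw [intervalIntegral.integral_add intervalIntegrable_const (hw2.div_const (2 * r)),
        intervalIntegral.integral_const, intervalIntegral.integral_div] at step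
      simpa [smul_eq_mul, hB'] using step
    rcases hA.eq_or_lt with hA0 | hA0
    · have : (0:ℝ) ≤ (s - t) * B := mul_nonneg hst.le hB
      nlinarith
    · have hr : 0 < A / (s - t) := div_pos hA0 hst
      have k := key _ hr
      have hstne : s - t ≠ 0 := hst.ne'
      have hAne : A ≠ 0 := hA0.ne'
      have e1 : (s - t) * (A / (s - t) / 2) = A / 2 := by field_simp
      have e2 : B / (2 * (A / (s - t))) = B * (s - t) / (2 * A) := by
        field_simp
      rw [e1, e2] at k
      have h5 : A / 2 ≤ B * (s - t) / (2 * A) := by linarith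
      rw [div_le_div_iff₀ (by norm_num) (by positivity)] at h5
      nlinarith

/-- The state `X(s) = X + ∫_t^s v(σ) dσ` associated to the control `v`. -/
noncomputable def state (X : H) (t : ℝ) (v : ℝ → H) (s : ℝ) : H :=
  X + ∫ σ in t..s, v σ

/-- A control belongs to `L²(t,T;H)`. -/
def Admissible (t T : ℝ) (v : ℝ → H) : Prop :=
  IntervalIntegrable v volume t T ∧ IntervalIntegrable (fun s => ‖v s‖ ^ 2) volume t T

/-- The cost functional `J_{X,t}(v)`. -/
noncomputable def cost (F FT : H → ℝ) (lam : ℝ) (X : H) (t T : ℝ) (v : ℝ → H) : ℝ :=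
  lam / 2 * (∫ s in t..T, ‖v s‖ ^ 2) + (∫ s in t..T, F (state X t v s)) + FT (state X t v T)

/-- The value function `V(X,t) = inf_v J_{X,t}(v)`. -/
noncomputable def valueFn (F FT : H → ℝ) (lam T : ℝ) (X : H) (t : ℝ) : ℝ :=
  sInf ((fun v => cost F FT lam X t T v) '' {v : ℝ → H | Admissible t T v})

/-- The adjoint state `Z(s) = D F_T(Y(T)) + ∫_s^T D F(Y(σ)) dσ` associated to a path `Y`. -/
noncomputable def adjZ (DF DFT : H → H) (T : ℝ) (Y : ℝ → H) (s : ℝ) : H :=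
  DFT (Y T) + ∫ σ in s..T, DF (Y σ)

/-- `Y` solves the two-point boundary value problem
`dY/ds = -(1/λ) Z(s)`, `-dZ/ds = D F(Y(s))`, `Y(t) = X`, `Z(T) = D F_T(Y(T))`,
where `Z = adjZ DF DFT T Y` encodes the two last conditions. -/
def IsOptimalPath (DF DFT : H → H) (lam T : ℝ) (X : H) (t : ℝ) (Y : ℝ → H) : Prop :=
  ContinuousOn Y (Icc t T) ∧ Y t = X ∧
    ∀ s ∈ Icc t T, HasDerivWithinAt Y (-(1 / lam) • adjZ DF DFT T Y s) (Icc t T) s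

/-- Continuity of the state. -/
private lemma state_contOn {X : H} {t T : ℝ} {v : ℝ → H} (htT : t ≤ T)
    (hv : IntervalIntegrable v volume t T) :
    ContinuousOn (state X t v) (Icc t T) := by
  have h : IntegrableOn v (uIcc t T) volume := by
    rw [uIcc_of_le htT]
    exact (intervalIntegrable_iff_integrableOn_Icc_of_le htT).mp hv
  have := intervalIntegral.continuousOn_primitive_interval (a := t) (b := T) h
  rw [uIcc_of_le htT] at this
  exact continuousOn_const.add this

set_option maxHeartbeats 2000000 in
/-- strict convexity of the cost functional when `λ > cT(1+T)`. -/
theorem statement1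
    (F FT : H → ℝ) (DF DFT : H → H) (c T lam : ℝ)
    (hF : ∀ X, HasGradientAt F (DF X) X) (hFT : ∀ X, HasGradientAt FT (DFT X) X)
    (hDF : ∀ X₁ X₂ : H, ‖DF X₁ - DF X₂‖ ≤ c * ‖X₁ - X₂‖)
    (hDFT : ∀ X₁ X₂ : H, ‖DFT X₁ - DFT X₂‖ ≤ c * ‖X₁ - X₂‖)
    (hDF0 : ‖DF 0‖ ≤ c) (hDFT0 : ‖DFT 0‖ ≤ c)
    (hT : 0 < T) (hlam : 0 < lam)
    (hlc : c * T * (1 + T) < lam)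
    (t : ℝ) (ht : t ∈ Icc 0 T) (X : H)
    (v₁ v₂ : ℝ → H) (hv₁ : Admissible t T v₁) (hv₂ : Admissible t T v₂)
    (θ : ℝ) (hθ : θ ∈ Icc (0 : ℝ) 1) :
    cost F FT lam X t T (fun s => θ • v₁ s + (1 - θ) • v₂ s) ≤
      θ * cost F FT lam X t T v₁ + (1 - θ) * cost F FT lam X t T v₂ -
        θ * (1 - θ) / 2 * (lam - c * T * (1 + T)) * ∫ s in t..T, ‖v₁ s - v₂ s‖ ^ 2 := by
  obtain ⟨ht0, htT⟩ := ht
  obtain ⟨hθ0, hθ1⟩ := hθ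
  have hθ1' : (0:ℝ) ≤ 1 - θ := by linarith
  have hc : 0 ≤ c := le_trans (norm_nonneg _) hDF0
  have hi1 := hv₁.1
  have hi2 := hv₂.1
  have hicombo : IntervalIntegrable (fun σ => θ • v₁ σ + (1 - θ) • v₂ σ) volume t T := by
    simpa using ((hi1.smul θ).add (hi2.smul (1 - θ)))
  have hw : IntervalIntegrable (fun σ => v₁ σ - v₂ σ) volume t T := hi1.sub hi2
  have hwn : IntervalIntegrable (fun σ => ‖v₁ σ - v₂ σ‖) volume t T := hw.norm
  have hw2 : IntervalIntegrable (fun σ => ‖v₁ σ - v₂ σ‖ ^ 2) volume t T := by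
    apply IntervalIntegrable.mono_fun ((hv₁.2.const_mul 2).add (hv₂.2.const_mul 2))
    · have hm := (intervalIntegrable_iff.mp hw).aestronglyMeasurable
      simpa [pow_two, Pi.mul_def] using hm.norm.mul hm.norm
    · filter_upwards with x
      have h1 := norm_sub_le (v₁ x) (v₂ x)
      have h2 : (0:ℝ) ≤ ‖v₁ x - v₂ x‖ ^ 2 := sq_nonneg _
      have h3 : (0:ℝ) ≤ 2 * ‖v₁ x‖ ^ 2 + 2 * ‖v₂ x‖ ^ 2 := by positivity
      rw [Real.norm_eq_abs, abs_of_nonneg h2, Real.norm_eq_abs, abs_of_nonneg h3]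
      have h4 : ‖v₁ x - v₂ x‖ ^ 2 ≤ (‖v₁ x‖ + ‖v₂ x‖) ^ 2 :=
        pow_le_pow_left₀ (norm_nonneg _) h1 2
      nlinarith [h4, sq_nonneg (‖v₁ x‖ - ‖v₂ x‖)]
  set I := ∫ s in t..T, ‖v₁ s - v₂ s‖ ^ 2 with hIdef
  have hI : 0 ≤ I := intervalIntegral.integral_nonneg htT fun _ _ => sq_nonneg _
  -- restriction helpers
  have hsub : ∀ {s : ℝ}, s ∈ Icc t T → uIcc t s ⊆ uIcc t T := by
    intro s hs
    apply uIcc_subset_uIcc left_mem_uIcc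
    rw [uIcc_of_le htT]; exact hs
  -- combination of states
  have hcombo : ∀ s ∈ Icc t T,
      state X t (fun σ => θ • v₁ σ + (1 - θ) • v₂ σ) s
        = θ • state X t v₁ s + (1 - θ) • state X t v₂ s := by
    intro s hs
    unfold state
    have h1 : IntervalIntegrable v₁ volume t s := hi1.mono_set (hsub hs)
    have h2 : IntervalIntegrable v₂ volume t s := hi2.mono_set (hsub hs)
    rw [intervalIntegral.integral_add (by simpa [Pi.smul_def] using h1.smul θ) (by simpa [Pi.smul_def] using h2.smul (1 - θ)),
      intervalIntegral.integral_smul, intervalIntegral.integral_smul]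
    module
  -- distance estimate
  have hdist : ∀ s ∈ Icc t T,
      ‖state X t v₁ s - state X t v₂ s‖ ^ 2 ≤ (s - t) * I := by
    intro s hs
    have hts : t ≤ s := hs.1
    have h1 : IntervalIntegrable v₁ volume t s := hi1.mono_set (hsub hs)
    have h2 : IntervalIntegrable v₂ volume t s := hi2.mono_set (hsub hs)
    have hwns : IntervalIntegrable (fun σ => ‖v₁ σ - v₂ σ‖) volume t s := hwn.mono_set (hsub hs)
    have hw2s : IntervalIntegrable (fun σ => ‖v₁ σ - v₂ σ‖ ^ 2) volume t s :=
      hw2.mono_set (hsub hs)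
    have hw2sT : IntervalIntegrable (fun σ => ‖v₁ σ - v₂ σ‖ ^ 2) volume s T :=
      hw2.mono_set (by
        apply uIcc_subset_uIcc _ right_mem_uIcc
        rw [uIcc_of_le htT]; exact hs)
    have e0 : state X t v₁ s - state X t v₂ s = ∫ σ in t..s, (v₁ σ - v₂ σ) := by
      unfold state
      rw [intervalIntegral.integral_sub h1 h2]
      abel
    have e1 : ‖state X t v₁ s - state X t v₂ s‖ ≤ ∫ σ in t..s, ‖v₁ σ - v₂ σ‖ := by
      rw [e0]
      exact intervalIntegral.norm_integral_le_integral_norm hts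
    have e2 : (∫ σ in t..s, ‖v₁ σ - v₂ σ‖) ^ 2 ≤ (s - t) * ∫ σ in t..s, ‖v₁ σ - v₂ σ‖ ^ 2 :=
      cs_aux hts hwns hw2s
    have e3 : (∫ σ in t..s, ‖v₁ σ - v₂ σ‖ ^ 2) ≤ I := by
      rw [hIdef, ← intervalIntegral.integral_add_adjacent_intervals hw2s hw2sT]
      have : 0 ≤ ∫ σ in s..T, ‖v₁ σ - v₂ σ‖ ^ 2 :=
        intervalIntegral.integral_nonneg hs.2 fun _ _ => sq_nonneg _
      linarith
    calc ‖state X t v₁ s - state X t v₂ s‖ ^ 2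
        ≤ (∫ σ in t..s, ‖v₁ σ - v₂ σ‖) ^ 2 :=
          pow_le_pow_left₀ (norm_nonneg _) e1 2
      _ ≤ (s - t) * ∫ σ in t..s, ‖v₁ σ - v₂ σ‖ ^ 2 := e2
      _ ≤ (s - t) * I := mul_le_mul_of_nonneg_left e3 (by linarith)
  -- continuity of everything
  have hFc : Continuous F := continuous_iff_continuousAt.mpr fun x =>
    (hasGradientAt_iff_hasFDerivAt.mp (hF x)).differentiableAt.continuousAt
  have hY1 : ContinuousOn (state X t v₁) (Icc t T) := state_contOn htT hi1
  have hY2 : ContinuousOn (state X t v₂) (Icc t T) := state_contOn htT hi2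
  have hYθ : ContinuousOn (state X t (fun σ => θ • v₁ σ + (1 - θ) • v₂ σ)) (Icc t T) :=
    state_contOn htT hicombo
  have hintF1 : IntervalIntegrable (fun s => F (state X t v₁ s)) volume t T := by
    apply ContinuousOn.intervalIntegrable
    rw [uIcc_of_le htT]; exact hFc.comp_continuousOn hY1
  have hintF2 : IntervalIntegrable (fun s => F (state X t v₂ s)) volume t T := by
    apply ContinuousOn.intervalIntegrable
    rw [uIcc_of_le htT]; exact hFc.comp_continuousOn hY2
  have hintFθ : IntervalIntegrable
      (fun s => F (state X t (fun σ => θ • v₁ σ + (1 - θ) • v₂ σ) s)) volume t T := by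
    apply ContinuousOn.intervalIntegrable
    rw [uIcc_of_le htT]; exact hFc.comp_continuousOn hYθ
  -- term 1 : the quadratic term
  have term1 : ∫ s in t..T, ‖θ • v₁ s + (1 - θ) • v₂ s‖ ^ 2
      = θ * (∫ s in t..T, ‖v₁ s‖ ^ 2) + (1 - θ) * (∫ s in t..T, ‖v₂ s‖ ^ 2)
        - θ * (1 - θ) * I := by
    rw [intervalIntegral.integral_congr
      (g := fun s => θ * ‖v₁ s‖ ^ 2 + (1 - θ) * ‖v₂ s‖ ^ 2 - θ * (1 - θ) * ‖v₁ s - v₂ s‖ ^ 2)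
      (fun s _ => norm_combo θ (v₁ s) (v₂ s))]
    rw [intervalIntegral.integral_sub
      (((hv₁.2.const_mul θ)).add ((hv₂.2.const_mul (1 - θ)))) (hw2.const_mul _),
      intervalIntegral.integral_add (hv₁.2.const_mul θ) (hv₂.2.const_mul (1 - θ)),
      intervalIntegral.integral_const_mul, intervalIntegral.integral_const_mul,
      intervalIntegral.integral_const_mul]
  -- term 2 : the running-cost term
  have hE : (∫ s in t..T, (s - t)) = (T - t) ^ 2 / 2 := by
    rw [intervalIntegral.integral_sub intervalIntegral.intervalIntegrable_id
      intervalIntegrable_const, integral_id, intervalIntegral.integral_const]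
    simp [smul_eq_mul]; ring
  have term2 : (∫ s in t..T, F (state X t (fun σ => θ • v₁ σ + (1 - θ) • v₂ σ) s))
      ≤ θ * (∫ s in t..T, F (state X t v₁ s)) + (1 - θ) * (∫ s in t..T, F (state X t v₂ s))
        + (c / 2 * (θ * (1 - θ)) * I) * ((T - t) ^ 2 / 2) := by
    have step : (∫ s in t..T, F (state X t (fun σ => θ • v₁ σ + (1 - θ) • v₂ σ) s))
        ≤ ∫ s in t..T, (θ * F (state X t v₁ s) + (1 - θ) * F (state X t v₂ s)
            + (c / 2 * (θ * (1 - θ)) * I) * (s - t)) := by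
      apply intervalIntegral.integral_mono_on htT hintFθ
      · exact ((hintF1.const_mul θ).add (hintF2.const_mul (1 - θ))).add
          ((intervalIntegral.intervalIntegrable_id.sub intervalIntegrable_const).const_mul _)
      intro s hs
      rw [hcombo s hs]
      have h1 := semiconvex hF hDF hθ0 hθ1 (state X t v₁ s) (state X t v₂ s)
      have h2 := hdist s hs
      have h3 : c / 2 * (θ * (1 - θ)) * ‖state X t v₁ s - state X t v₂ s‖ ^ 2
          ≤ c / 2 * (θ * (1 - θ)) * ((s - t) * I) :=
        mul_le_mul_of_nonneg_left h2 (by positivity)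
      nlinarith
    rw [intervalIntegral.integral_add (((hintF1.const_mul θ)).add (hintF2.const_mul (1 - θ)))
        ((intervalIntegral.intervalIntegrable_id.sub intervalIntegrable_const).const_mul _),
      intervalIntegral.integral_add (hintF1.const_mul θ) (hintF2.const_mul (1 - θ)),
      intervalIntegral.integral_const_mul, intervalIntegral.integral_const_mul,
      intervalIntegral.integral_const_mul, hE] at step
    linarith
  -- term 3 : the terminal term
  have term3 : FT (state X t (fun σ => θ • v₁ σ + (1 - θ) • v₂ σ) T)
      ≤ θ * FT (state X t v₁ T) + (1 - θ) * FT (state X t v₂ T)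
        + c / 2 * (θ * (1 - θ)) * ((T - t) * I) := by
    rw [hcombo T (right_mem_Icc.mpr htT)]
    have h1 := semiconvex hFT hDFT hθ0 hθ1 (state X t v₁ T) (state X t v₂ T)
    have h2 := hdist T (right_mem_Icc.mpr htT)
    have h3 : c / 2 * (θ * (1 - θ)) * ‖state X t v₁ T - state X t v₂ T‖ ^ 2
        ≤ c / 2 * (θ * (1 - θ)) * ((T - t) * I) :=
      mul_le_mul_of_nonneg_left h2 (by positivity)
    linarith
  -- final assembly
  have hq : 0 ≤ T + T ^ 2 - ((T - t) ^ 2 / 2 + (T - t)) := by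
    nlinarith [mul_le_mul_of_nonneg_left htT ht0, sq_nonneg t, sq_nonneg (T - t)]
  have hP : 0 ≤ θ * (1 - θ) * I := by positivity
  have h3 := mul_nonneg (mul_nonneg hc hP) hq
  unfold cost
  rw [term1]
  nlinarith [term2, term3, h3]
end

section
/- For every δ > 0 there exists a constant C_δ (depending only on c and δ) such that for all X in H, t in [0,T], and all controls v(.) in L²(t,T;H), J_{X,t}(v(.)) ≥ ((λ − (c+δ)T(1+T))/2) ∫_t^T ||v(s)||² ds − C_δ (1+||X||²)(1+T). In particular, if λ > cT(1+T), then J_{X,t}(v(.)) → +∞ as ∫_t^T ||v(s)||² ds → +∞. -/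
open MeasureTheory Set
open scoped RealInnerProductSpace

variable {H : Type*} [NormedAddCommGroup H] [InnerProductSpace ℝ H] [CompleteSpace H]

section auxxwork
lemma aux_grad_cont {DG : H → H} {c : ℝ}
    (hL : ∀ x y : H, ‖DG x - DG y‖ ≤ c * ‖x - y‖) (h0 : ‖DG 0‖ ≤ c) :
    Continuous DG := by
  have hc : 0 ≤ c := le_trans (norm_nonneg _) h0
  exact (LipschitzWith.of_dist_le_mul (K := ⟨c, hc⟩)
    (fun x y => by rw [dist_eq_norm, dist_eq_norm]; exact hL x y)).continuous

lemma aux_lower_quad {G : H → ℝ} {DG : H → H} {c : ℝ}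
    (hG : ∀ x, HasGradientAt G (DG x) x)
    (hL : ∀ x y : H, ‖DG x - DG y‖ ≤ c * ‖x - y‖)
    (h0 : ‖DG 0‖ ≤ c) (Y : H) :
    G 0 - c * ‖Y‖ - c / 2 * ‖Y‖ ^ 2 ≤ G Y := by
  have hc : 0 ≤ c := le_trans (norm_nonneg _) h0
  have hderiv : ∀ τ : ℝ, HasDerivAt (fun τ : ℝ => G (τ • Y)) ⟪DG (τ • Y), Y⟫ τ := by
    intro τ
    have hs : HasDerivAt (fun τ : ℝ => τ • Y) Y τ := by
      simpa using (hasDerivAt_id τ).smul_const Y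
    have := ((hG (τ • Y)).hasFDerivAt.comp_hasDerivAt τ hs)
    simp at this
    exact this
  have hcont : Continuous (fun τ : ℝ => ⟪DG (τ • Y), Y⟫) :=
    ((aux_grad_cont hL h0).comp (continuous_id.smul continuous_const)).inner continuous_const
  have key : ∫ τ in (0:ℝ)..1, ⟪DG (τ • Y), Y⟫ = G Y - G 0 := by
    have := intervalIntegral.integral_eq_sub_of_hasDerivAt
      (f := fun τ : ℝ => G (τ • Y)) (f' := fun τ : ℝ => ⟪DG (τ • Y), Y⟫)
      (fun τ _ => hderiv τ) (hcont.intervalIntegrable 0 1)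
    simpa using this
  have hpt : ∀ τ ∈ Icc (0:ℝ) 1,
      -(c * ‖Y‖ + c * ‖Y‖ ^ 2 * τ) ≤ ⟪DG (τ • Y), Y⟫ := by
    intro τ hτ
    have h1 : ‖DG (τ • Y)‖ ≤ c + c * (τ * ‖Y‖) := by
      have := hL (τ • Y) 0
      have hn : ‖τ • Y‖ = τ * ‖Y‖ := by
        rw [norm_smul, Real.norm_eq_abs, abs_of_nonneg hτ.1]
      calc ‖DG (τ • Y)‖ ≤ ‖DG (τ • Y) - DG 0‖ + ‖DG 0‖ := by
            simpa using norm_sub_le_norm_sub_add_norm_sub (DG (τ • Y)) (DG 0) 0 |>.trans (by simp)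
        _ ≤ c + c * (τ * ‖Y‖) := by
            rw [sub_zero] at this; rw [hn] at this; linarith
    have h2 : -(‖DG (τ • Y)‖ * ‖Y‖) ≤ ⟪DG (τ • Y), Y⟫ := by
      have := abs_real_inner_le_norm (DG (τ • Y)) Y
      linarith [neg_abs_le ⟪DG (τ • Y), Y⟫]
    have h3 : (c + c * (τ * ‖Y‖)) * ‖Y‖ = c * ‖Y‖ + c * ‖Y‖ ^ 2 * τ := by ring
    nlinarith [norm_nonneg Y, mul_le_mul_of_nonneg_right h1 (norm_nonneg Y)]
  have hint : ∫ τ in (0:ℝ)..1, -(c * ‖Y‖ + c * ‖Y‖ ^ 2 * τ) = -(c * ‖Y‖ + c * ‖Y‖ ^ 2 / 2) := by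
    have : ∫ τ in (0:ℝ)..1, (c * ‖Y‖ + c * ‖Y‖ ^ 2 * τ) = c * ‖Y‖ + c * ‖Y‖ ^ 2 / 2 := by
      rw [intervalIntegral.integral_add (intervalIntegrable_const)
        ((by continuity : Continuous fun τ : ℝ => c * ‖Y‖ ^ 2 * τ).intervalIntegrable 0 1)]
      have : ∫ τ in (0:ℝ)..1, c * ‖Y‖ ^ 2 * τ = c * ‖Y‖ ^ 2 * ∫ τ in (0:ℝ)..1, τ :=
        intervalIntegral.integral_const_mul _ _
      rw [this, integral_id, intervalIntegral.integral_const]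
      simp
      ring
    rw [intervalIntegral.integral_neg, this]
  have hcmp : -(c * ‖Y‖ + c * ‖Y‖ ^ 2 / 2) ≤ G Y - G 0 := by
    rw [← hint, ← key]
    refine intervalIntegral.integral_mono_on (by norm_num)
      ((by continuity : Continuous fun τ : ℝ => -(c * ‖Y‖ + c * ‖Y‖ ^ 2 * τ)).intervalIntegrable 0 1)
      (hcont.intervalIntegrable 0 1) hpt
  linarith

-- Young split of the linear term
lemma aux_young_lin {c η y : ℝ} (hc : 0 ≤ c) (hη : 0 < η) (hy : 0 ≤ y) :
    c * y ≤ c / (2 * η) + c * η / 2 * y ^ 2 := by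
  have h1 : 2 * η * (c * y) ≤ c + c * η ^ 2 * y ^ 2 := by
    nlinarith [mul_nonneg hc (sq_nonneg (η * y - 1))]
  have h2 : c * y ≤ (c + c * η ^ 2 * y ^ 2) / (2 * η) := by
    rw [le_div_iff₀ (by positivity)]
    linarith
  have h3 : (c + c * η ^ 2 * y ^ 2) / (2 * η) = c / (2 * η) + c * η / 2 * y ^ 2 := by
    field_simp
  linarith [h3 ▸ h2]

-- (a+b)^2 ≤ (1+1/ε) a^2 + (1+ε) b^2
lemma aux_young_sq {ε a b : ℝ} (hε : 0 < ε) :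
    (a + b) ^ 2 ≤ (1 + 1 / ε) * a ^ 2 + (1 + ε) * b ^ 2 := by
  have h1 : ε * ((a + b) ^ 2) ≤ ε * ((1 + 1 / ε) * a ^ 2 + (1 + ε) * b ^ 2) := by
    have he : ε * (1 / ε) = 1 := by field_simp
    nlinarith [sq_nonneg (a - ε * b), sq_nonneg a, sq_nonneg b]
  exact le_of_mul_le_mul_left h1 hε

-- Cauchy-Schwarz for interval integrals
lemma aux_cs {v : ℝ → ℝ} {t u : ℝ} (htu : t ≤ u)
    (h1 : IntervalIntegrable v volume t u)
    (h2 : IntervalIntegrable (fun s => v s ^ 2) volume t u) :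
    (∫ s in t..u, v s) ^ 2 ≤ (u - t) * ∫ s in t..u, v s ^ 2 := by
  rcases eq_or_lt_of_le htu with rfl | hlt
  · simp
  set L := u - t with hLdef
  have hL : 0 < L := by simp [hLdef]; linarith
  set I1 := ∫ s in t..u, v s with hI1
  set I2 := ∫ s in t..u, v s ^ 2 with hI2
  set m := I1 / L with hm
  have hnn : 0 ≤ ∫ s in t..u, (v s - m) ^ 2 :=
    intervalIntegral.integral_nonneg htu (fun s _ => sq_nonneg _)
  have hexp : ∫ s in t..u, (v s - m) ^ 2 = I2 - 2 * m * I1 + m ^ 2 * L := by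
    have heq : ∀ s, (v s - m) ^ 2 = v s ^ 2 - 2 * m * v s + m ^ 2 := fun s => by ring
    simp_rw [heq]
    rw [intervalIntegral.integral_add (h2.sub ((h1.const_mul (2*m))))
        intervalIntegrable_const,
      intervalIntegral.integral_sub h2 (h1.const_mul (2*m)),
      intervalIntegral.integral_const_mul, intervalIntegral.integral_const]
    simp [hLdef]
    ring
  have key : 0 ≤ I2 - 2 * m * I1 + m ^ 2 * L := hexp ▸ hnn
  have hm2 : m ^ 2 * L = I1 ^ 2 / L := by
    rw [hm]; field_simp
  have hmI : 2 * m * I1 = 2 * I1 ^ 2 / L := by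
    rw [hm]; ring
  have : I1 ^ 2 / L ≤ I2 := by
    rw [hm2, hmI] at key
    have h3 : 2 * I1 ^ 2 / L - I1 ^ 2 / L = I1 ^ 2 / L := by ring
    linarith
  calc I1 ^ 2 = (I1 ^ 2 / L) * L := by field_simp
    _ ≤ I2 * L := mul_le_mul_of_nonneg_right this hL.le
    _ = L * I2 := by ring

-- integral of an affine function of (s - t)
lemma aux_affine (t T K0 K1 : ℝ) :
    ∫ s in t..T, (K0 + K1 * (s - t)) = K0 * (T - t) + K1 * (T - t) ^ 2 / 2 := by
  have h := intervalIntegral.integral_comp_sub_right (a := t) (b := T)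
    (fun u => K0 + K1 * u) t
  rw [h]
  rw [intervalIntegral.integral_add intervalIntegrable_const
    ((by continuity : Continuous fun u : ℝ => K1 * u).intervalIntegrable _ _),
    intervalIntegral.integral_const_mul, integral_id, intervalIntegral.integral_const]
  simp
  ring
end auxxwork

/-- coercivity lower bound for the cost functional; consequently, if
`λ > cT(1+T)`, the cost tends to `+∞` as the `L²` norm of the control tends to `+∞`. -/



theorem statement2
    (F FT : H → ℝ) (DF DFT : H → H) (c T lam : ℝ)
    (hF : ∀ X, HasGradientAt F (DF X) X) (hFT : ∀ X, HasGradientAt FT (DFT X) X)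
    (hDF : ∀ X₁ X₂ : H, ‖DF X₁ - DF X₂‖ ≤ c * ‖X₁ - X₂‖)
    (hDFT : ∀ X₁ X₂ : H, ‖DFT X₁ - DFT X₂‖ ≤ c * ‖X₁ - X₂‖)
    (hDF0 : ‖DF 0‖ ≤ c) (hDFT0 : ‖DFT 0‖ ≤ c)
    (hT : 0 < T) (hlam : 0 < lam)
    :
    (∀ δ > (0 : ℝ), ∃ C : ℝ, ∀ X : H, ∀ t ∈ Icc 0 T, ∀ v : ℝ → H, Admissible t T v →
      (lam - (c + δ) * T * (1 + T)) / 2 * (∫ s in t..T, ‖v s‖ ^ 2) -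
          C * (1 + ‖X‖ ^ 2) * (1 + T) ≤ cost F FT lam X t T v) ∧
    (c * T * (1 + T) < lam → ∀ X : H, ∀ t ∈ Icc 0 T, ∀ M : ℝ, ∃ R : ℝ, ∀ v : ℝ → H,
      Admissible t T v → R ≤ (∫ s in t..T, ‖v s‖ ^ 2) → M ≤ cost F FT lam X t T v) := by
  have hc : 0 ≤ c := le_trans (norm_nonneg _) hDF0
  have key : ∀ δ > (0 : ℝ), ∃ C : ℝ, ∀ X : H, ∀ t ∈ Icc 0 T, ∀ v : ℝ → H, Admissible t T v →
      (lam - (c + δ) * T * (1 + T)) / 2 * (∫ s in t..T, ‖v s‖ ^ 2) -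
          C * (1 + ‖X‖ ^ 2) * (1 + T) ≤ cost F FT lam X t T v := by
    intro δ hδ
    obtain ⟨ε, hεdef⟩ : ∃ e : ℝ, e = min 1 (δ / (3 * (c + 1))) := ⟨_, rfl⟩
    have hε : 0 < ε := by
      rw [hεdef]; exact lt_min one_pos (div_pos hδ (by linarith))
    have hε1 : ε ≤ 1 := by rw [hεdef]; exact min_le_left _ _
    have h1ε : (0:ℝ) < 1 + ε := by linarith
    have hinv : (0:ℝ) < 1 + 1 / ε := by
      have := one_div_pos.2 hε; linarith
    have hcoef : (0:ℝ) ≤ c / 2 * (1 + ε) := mul_nonneg (by linarith) h1ε.le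
    have hcoef2 : (0:ℝ) ≤ c / 2 * (1 + ε) * (1 + 1 / ε) := mul_nonneg hcoef hinv.le
    have hceps : (0:ℝ) ≤ c / ε := div_nonneg hc hε.le
    have hkey : c * ((1 + ε) * (1 + ε)) ≤ c + δ := by
      have h2 : ε ≤ δ / (3 * (c + 1)) := by rw [hεdef]; exact min_le_right _ _
      have h3 : ε * (3 * (c + 1)) ≤ δ := by
        rw [← le_div_iff₀ (by linarith : (0:ℝ) < 3 * (c + 1))]; exact h2
      nlinarith [mul_nonneg (mul_nonneg hc hε.le) (sub_nonneg.2 hε1), mul_nonneg hc hε.le]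
    refine ⟨c / 2 * (1 + ε) * (1 + 1 / ε) + (|F 0| + |FT 0| + c / ε), ?_⟩
    rintro X t ⟨ht0, htT⟩ v ⟨hv1, hv2⟩
    obtain ⟨A, hA⟩ : ∃ a : ℝ, a = ∫ s in t..T, ‖v s‖ ^ 2 := ⟨_, rfl⟩
    have hA0 : 0 ≤ A := by
      rw [hA]; exact intervalIntegral.integral_nonneg htT (fun s _ => sq_nonneg _)
    obtain ⟨N, hN⟩ : ∃ n : ℝ, n = ‖X‖ ^ 2 := ⟨_, rfl⟩
    have hN0 : 0 ≤ N := by rw [hN]; exact sq_nonneg _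
    obtain ⟨L, hLdef⟩ : ∃ l : ℝ, l = T - t := ⟨_, rfl⟩
    have hL0 : 0 ≤ L := by rw [hLdef]; linarith
    have hLT : L ≤ T := by rw [hLdef]; linarith
    -- continuity of the state
    have hYcont : ContinuousOn (state X t v) (Icc t T) := by
      have h := intervalIntegral.continuousOn_primitive_interval' hv1 left_mem_uIcc
      rw [uIcc_of_le htT] at h
      exact continuousOn_const.add h
    -- pointwise bound on the squared norm of the state
    have hYbd : ∀ s ∈ Icc t T,
        ‖state X t v s‖ ^ 2 ≤ (1 + 1 / ε) * N + (1 + ε) * ((s - t) * A) := by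
      intro s hs
      have hts : t ≤ s := hs.1
      have hsT : s ≤ T := hs.2
      have hsub : uIcc t s ⊆ uIcc t T := by
        rw [uIcc_of_le hts, uIcc_of_le htT]; exact Icc_subset_Icc le_rfl hsT
      have hsub2 : uIcc s T ⊆ uIcc t T := by
        rw [uIcc_of_le hsT, uIcc_of_le htT]; exact Icc_subset_Icc hts le_rfl
      have hv1s : IntervalIntegrable v volume t s := hv1.mono_set hsub
      have hv2s : IntervalIntegrable (fun σ => ‖v σ‖ ^ 2) volume t s := hv2.mono_set hsub
      have hnv : IntervalIntegrable (fun σ => ‖v σ‖) volume t s := hv1s.norm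
      obtain ⟨B, hB⟩ : ∃ b : ℝ, b = ∫ σ in t..s, ‖v σ‖ := ⟨_, rfl⟩
      have hB0 : 0 ≤ B := by
        rw [hB]; exact intervalIntegral.integral_nonneg hts (fun _ _ => norm_nonneg _)
      have h1 : ‖state X t v s‖ ≤ ‖X‖ + B := by
        rw [hB]
        refine (norm_add_le _ _).trans ?_
        exact add_le_add le_rfl (intervalIntegral.norm_integral_le_integral_norm hts)
      have h2 : B ^ 2 ≤ (s - t) * ∫ σ in t..s, ‖v σ‖ ^ 2 := by
        rw [hB]; exact aux_cs hts hnv hv2s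
      have h3 : ∫ σ in t..s, ‖v σ‖ ^ 2 ≤ A := by
        have hadd := intervalIntegral.integral_add_adjacent_intervals hv2s
          (hv2.mono_set hsub2)
        have hnn : 0 ≤ ∫ σ in s..T, ‖v σ‖ ^ 2 :=
          intervalIntegral.integral_nonneg hsT (fun _ _ => sq_nonneg _)
        rw [hA]; linarith [hadd]
      have h4 : B ^ 2 ≤ (s - t) * A :=
        h2.trans (mul_le_mul_of_nonneg_left h3 (by linarith))
      have h5 := aux_young_sq hε (a := ‖X‖) (b := B)
      have h6 : ‖state X t v s‖ ^ 2 ≤ (‖X‖ + B) ^ 2 :=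
        pow_le_pow_left₀ (norm_nonneg _) h1 2
      have h7 : (1 + 1 / ε) * ‖X‖ ^ 2 + (1 + ε) * B ^ 2
          ≤ (1 + 1 / ε) * N + (1 + ε) * ((s - t) * A) := by
        rw [hN]
        exact add_le_add le_rfl (mul_le_mul_of_nonneg_left h4 h1ε.le)
      exact h6.trans (h5.trans h7)
    -- pointwise lower bound on F along the state, affine in (s - t)
    obtain ⟨K0, hK0⟩ : ∃ k : ℝ,
      k = F 0 - c / (2 * ε) - c / 2 * (1 + ε) * ((1 + 1 / ε) * N) := ⟨_, rfl⟩
    obtain ⟨K1, hK1⟩ : ∃ k : ℝ, k = -(c / 2 * (1 + ε) * ((1 + ε) * A)) := ⟨_, rfl⟩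
    have hFl : ∀ s ∈ Icc t T, K0 + K1 * (s - t) ≤ F (state X t v s) := by
      intro s hs
      have hq := aux_lower_quad hF hDF hDF0 (state X t v s)
      have hyl := aux_young_lin hc hε (norm_nonneg (state X t v s))
      have hyb := hYbd s hs
      have hmul := mul_le_mul_of_nonneg_left hyb hcoef
      rw [hK0, hK1]
      linarith [hq, hyl, hmul]
    -- integrate the pointwise bound
    have hFYcont : ContinuousOn (fun s => F (state X t v s)) (Icc t T) := by
      have hFc : Continuous F :=
        continuous_iff_continuousAt.2 fun x => (hF x).hasFDerivAt.continuousAt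
      exact hFc.comp_continuousOn hYcont
    have hFYint : IntervalIntegrable (fun s => F (state X t v s)) volume t T := by
      rw [intervalIntegrable_iff_integrableOn_Icc_of_le htT]
      exact hFYcont.integrableOn_compact isCompact_Icc
    have hIF : K0 * L + K1 * L ^ 2 / 2 ≤ ∫ s in t..T, F (state X t v s) := by
      rw [hLdef, ← aux_affine t T K0 K1]
      refine intervalIntegral.integral_mono_on htT ?_ hFYint hFl
      exact (continuous_const.add
        (continuous_const.mul (continuous_id.sub continuous_const))).intervalIntegrable t T
    -- terminal term
    have hFTl : FT 0 - c / (2 * ε) -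
        c / 2 * (1 + ε) * ((1 + 1 / ε) * N + (1 + ε) * (L * A)) ≤ FT (state X t v T) := by
      have hq := aux_lower_quad hFT hDFT hDFT0 (state X t v T)
      have hyl := aux_young_lin hc hε (norm_nonneg (state X t v T))
      have hyb := hYbd T ⟨htT, le_rfl⟩
      rw [hLdef]
      have hmul := mul_le_mul_of_nonneg_left hyb hcoef
      linarith [hq, hyl, hmul]
    -- combine everything
    have hsum : L ^ 2 / 2 + L ≤ T * (1 + T) := by
      linarith [pow_le_pow_left₀ hL0 hLT 2, sq_nonneg T]
    have g1 : c * ((1 + ε) * (1 + ε)) * (L ^ 2 / 2 + L) * A ≤ (c + δ) * (T * (1 + T)) * A := by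
      have base := mul_le_mul hkey hsum (by linarith [sq_nonneg L] : (0:ℝ) ≤ L ^ 2 / 2 + L) (by linarith)
      exact mul_le_mul_of_nonneg_right base hA0
    have g2 : c / 2 * (1 + ε) * (1 + 1 / ε) * N * (L + 1)
        ≤ c / 2 * (1 + ε) * (1 + 1 / ε) * N * (1 + T) := by
      have hnn : (0:ℝ) ≤ c / 2 * (1 + ε) * (1 + 1 / ε) * N := mul_nonneg hcoef2 hN0
      exact mul_le_mul_of_nonneg_left (by linarith : L + 1 ≤ 1 + T) hnn
    have g3 : -(F 0 * L) ≤ |F 0| * (1 + T) := by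
      calc -(F 0 * L) = -F 0 * L := by ring
        _ ≤ |F 0| * L := mul_le_mul_of_nonneg_right (neg_le_abs _) hL0
        _ ≤ |F 0| * (1 + T) := mul_le_mul_of_nonneg_left (by linarith) (abs_nonneg _)
    have g4 : -(FT 0) ≤ |FT 0| * (1 + T) := by
      calc -(FT 0) ≤ |FT 0| := neg_le_abs _
        _ = |FT 0| * 1 := (mul_one _).symm
        _ ≤ |FT 0| * (1 + T) := mul_le_mul_of_nonneg_left (by linarith) (abs_nonneg _)
    have g5 : c / (2 * ε) * (L + 1) ≤ c / ε * (1 + T) := by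
      have hc2e : (0:ℝ) ≤ c / (2 * ε) := div_nonneg hc (by linarith)
      have hle : c / (2 * ε) ≤ c / ε := by
        have he : c / (2 * ε) = c / ε / 2 := by ring
        linarith [hceps]
      calc c / (2 * ε) * (L + 1) ≤ c / (2 * ε) * (1 + T) :=
            mul_le_mul_of_nonneg_left (by linarith) hc2e
        _ ≤ c / ε * (1 + T) := mul_le_mul_of_nonneg_right hle (by linarith)
    have p1 : (0:ℝ) ≤ c / 2 * (1 + ε) * (1 + 1 / ε) * (1 + T) := mul_nonneg hcoef2 (by linarith)
    have p2 : (0:ℝ) ≤ (|F 0| + |FT 0| + c / ε) * N * (1 + T) :=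
      mul_nonneg (mul_nonneg (by positivity) hN0) (by linarith)
    rw [cost, ← hA, ← hN]
    rw [hK0, hK1] at hIF
    linarith [hIF, hFTl, g1, g2, g3, g4, g5, p1, p2, hA0, hN0, hL0, hLT, hT.le, hLdef]
  refine ⟨key, ?_⟩
  intro hc' X t ht M
  have hTT : 0 < T * (1 + T) := mul_pos hT (by linarith)
  obtain ⟨δ, hδdef⟩ : ∃ d : ℝ, d = (lam - c * T * (1 + T)) / (2 * (T * (1 + T))) := ⟨_, rfl⟩
  have hδ : 0 < δ := by rw [hδdef]; exact div_pos (by linarith) (by linarith)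
  obtain ⟨C, hC⟩ := key δ hδ
  obtain ⟨μ, hμ⟩ : ∃ m : ℝ, m = lam - (c + δ) * T * (1 + T) := ⟨_, rfl⟩
  have hμval : μ = (lam - c * T * (1 + T)) / 2 := by
    rw [hμ, hδdef]
    field_simp
    ring
  have hμ0 : 0 < μ := by rw [hμval]; linarith
  have hμne : μ ≠ 0 := ne_of_gt hμ0
  refine ⟨2 / μ * (M + C * (1 + ‖X‖ ^ 2) * (1 + T)), ?_⟩
  intro v hv hR
  have h1 := hC X t ht v hv
  have h2 : μ / 2 * (2 / μ * (M + C * (1 + ‖X‖ ^ 2) * (1 + T)))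
      = M + C * (1 + ‖X‖ ^ 2) * (1 + T) := by
    field_simp
  have h3 : μ / 2 * (2 / μ * (M + C * (1 + ‖X‖ ^ 2) * (1 + T)))
      ≤ μ / 2 * (∫ s in t..T, ‖v s‖ ^ 2) :=
    mul_le_mul_of_nonneg_left hR (by linarith)
  rw [h2] at h3
  rw [← hμ] at h1
  linarith [h1, h3]
end

section
/- Assume λ > cT(1+T) and let (Y(.), Z(.)) be the unique solution of the two-point boundary value problem dY/ds = −Z(s)/λ, −dZ/ds = D F(Y(s)), Y(t) = X, Z(T) = D F_T(Y(T)), with optimal control u(s) = −Z(s)/λ. Then sup_{t≤s≤T} ||Y(s)|| ≤ (λ||X|| + cT(T+1)) / (λ − cT(T+1)), sup_{t≤s≤T} ||Z(s)|| ≤ λ(1+T)c(1+||X||) / (λ − cT(T+1)), and sup_{t≤s≤T} ||u(s)|| ≤ (1+T)c(1+||X||) / (λ − cT(T+1)). -/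
open MeasureTheory Set
open scoped RealInnerProductSpace

variable {H : Type*} [NormedAddCommGroup H] [InnerProductSpace ℝ H] [CompleteSpace H]

/-- a priori bounds on the optimal trajectory `Y`, the adjoint state `Z` and
the optimal control `u = -(1/λ) Z`. -/
theorem statement5
    (F FT : H → ℝ) (DF DFT : H → H) (c T lam : ℝ)
    (hF : ∀ X, HasGradientAt F (DF X) X) (hFT : ∀ X, HasGradientAt FT (DFT X) X)
    (hDF : ∀ X₁ X₂ : H, ‖DF X₁ - DF X₂‖ ≤ c * ‖X₁ - X₂‖)
    (hDFT : ∀ X₁ X₂ : H, ‖DFT X₁ - DFT X₂‖ ≤ c * ‖X₁ - X₂‖)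
    (hDF0 : ‖DF 0‖ ≤ c) (hDFT0 : ‖DFT 0‖ ≤ c)
    (hT : 0 < T) (hlam : 0 < lam)
    (hlc : c * T * (1 + T) < lam)
    (X : H) (t : ℝ) (ht : t ∈ Icc 0 T)
    (Y : ℝ → H) (hY : IsOptimalPath DF DFT lam T X t Y) :
    ∀ s ∈ Icc t T,
      ‖Y s‖ ≤ (lam * ‖X‖ + c * T * (T + 1)) / (lam - c * T * (T + 1)) ∧
      ‖adjZ DF DFT T Y s‖ ≤ lam * (1 + T) * c * (1 + ‖X‖) / (lam - c * T * (T + 1)) ∧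
      ‖-(1 / lam) • adjZ DF DFT T Y s‖ ≤ (1 + T) * c * (1 + ‖X‖) / (lam - c * T * (T + 1)) := by
  obtain ⟨hYcont, hYt, hode⟩ := hY
  obtain ⟨ht0, htT⟩ := ht
  have hc0 : 0 ≤ c := le_trans (norm_nonneg _) hDF0
  have hA0 : 0 ≤ c * T * (1 + T) := by positivity
  have hAlam : 0 < lam - c * T * (1 + T) := by linarith
  have hne : (Icc t T).Nonempty := ⟨t, le_refl t, htT⟩
  obtain ⟨s₀, hs₀mem, hs₀max⟩ :=
    isCompact_Icc.exists_isMaxOn hne (continuous_norm.comp_continuousOn hYcont)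
  set M := ‖Y s₀‖ with hMdef
  have hM0 : 0 ≤ M := norm_nonneg _
  have hmax : ∀ s ∈ Icc t T, ‖Y s‖ ≤ M := fun s hs => hs₀max hs
  have hDFb : ∀ σ ∈ Icc t T, ‖DF (Y σ)‖ ≤ c * (M + 1) := by
    intro σ hσ
    have h1 := hDF (Y σ) 0
    simp only [sub_zero] at h1
    have h2 := hmax σ hσ
    have : ‖DF (Y σ)‖ ≤ ‖DF (Y σ) - DF 0‖ + ‖DF 0‖ := by
      simpa using norm_add_le (DF (Y σ) - DF 0) (DF 0)
    nlinarith [norm_nonneg (Y σ)]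
  have hDFTb : ‖DFT (Y T)‖ ≤ c * (M + 1) := by
    have h1 := hDFT (Y T) 0
    simp only [sub_zero] at h1
    have h2 := hmax T ⟨htT, le_refl T⟩
    have : ‖DFT (Y T)‖ ≤ ‖DFT (Y T) - DFT 0‖ + ‖DFT 0‖ := by
      simpa using norm_add_le (DFT (Y T) - DFT 0) (DFT 0)
    nlinarith [norm_nonneg (Y T)]
  have hZb : ∀ s ∈ Icc t T, ‖adjZ DF DFT T Y s‖ ≤ c * (M + 1) * (1 + T) := by
    intro s hs
    have hInt : ‖∫ σ in s..T, DF (Y σ)‖ ≤ c * (M + 1) * |T - s| := by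
      apply intervalIntegral.norm_integral_le_of_norm_le_const
      intro x hx
      rw [Set.uIoc_of_le hs.2] at hx
      exact hDFb x ⟨le_trans hs.1 (le_of_lt hx.1), hx.2⟩
    have habs : |T - s| ≤ T := by
      rw [abs_of_nonneg (by linarith [hs.2])]
      linarith [hs.1, ht0]
    have h0 : 0 ≤ c * (M + 1) := by positivity
    have := norm_add_le (DFT (Y T)) (∫ σ in s..T, DF (Y σ))
    unfold adjZ
    nlinarith
  have hub : ∀ s ∈ Icc t T,
      ‖-(1 / lam) • adjZ DF DFT T Y s‖ ≤ c * (M + 1) * (1 + T) / lam := by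
    intro s hs
    rw [norm_smul, norm_neg, norm_div, norm_one,
      Real.norm_of_nonneg (le_of_lt hlam)]
    have := hZb s hs
    rw [div_mul_eq_mul_div, one_mul, div_le_div_iff₀ hlam hlam]
    nlinarith
  have hMle : M ≤ ‖X‖ + c * (M + 1) * (1 + T) / lam * T := by
    have key := Convex.norm_image_sub_le_of_norm_hasDerivWithin_le hode hub
      (convex_Icc t T) ⟨le_refl t, htT⟩ hs₀mem
    have habs : ‖s₀ - t‖ ≤ T := by
      rw [Real.norm_eq_abs, abs_of_nonneg (by linarith [hs₀mem.1])]
      linarith [hs₀mem.2, ht0]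
    have h0 : 0 ≤ c * (M + 1) * (1 + T) / lam := by positivity
    have h1 : M ≤ ‖Y t‖ + ‖Y s₀ - Y t‖ := by
      simpa [hMdef] using norm_add_le (Y t) (Y s₀ - Y t)
    rw [hYt] at h1
    rw [hYt] at key
    nlinarith [key]
  have hM2 : lam * M ≤ lam * ‖X‖ + c * (M + 1) * (1 + T) * T := by
    have h := mul_le_mul_of_nonneg_left hMle (le_of_lt hlam)
    have he : lam * (‖X‖ + c * (M + 1) * (1 + T) / lam * T)
        = lam * ‖X‖ + c * (M + 1) * (1 + T) * T := by
      field_simp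
    linarith [he ▸ h]
  have hMfin : M ≤ (lam * ‖X‖ + c * T * (1 + T)) / (lam - c * T * (1 + T)) := by
    rw [le_div_iff₀ hAlam]
    nlinarith
  have hM1fin : M + 1 ≤ lam * (1 + ‖X‖) / (lam - c * T * (1 + T)) := by
    rw [le_div_iff₀ hAlam]
    nlinarith
  intro s hs
  have hZs := hZb s hs
  have hZfin : ‖adjZ DF DFT T Y s‖ ≤ lam * (1 + T) * c * (1 + ‖X‖) / (lam - c * T * (T + 1)) := by
    have h1 : c * (M + 1) * (1 + T) ≤ c * (1 + T) * (lam * (1 + ‖X‖) / (lam - c * T * (1 + T))) := by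
      have := mul_le_mul_of_nonneg_left hM1fin (by positivity : (0:ℝ) ≤ c * (1 + T))
      linarith [this, (by ring : c * (M + 1) * (1 + T) = c * (1 + T) * (M + 1))]
    have h2 : c * (1 + T) * (lam * (1 + ‖X‖) / (lam - c * T * (1 + T)))
        = lam * (1 + T) * c * (1 + ‖X‖) / (lam - c * T * (T + 1)) := by
      rw [show c * T * (T + 1) = c * T * (1 + T) by ring]
      field_simp
    linarith [h2 ▸ h1]
  refine ⟨?_, hZfin, ?_⟩
  · have := hmax s hs
    rw [show c * T * (T + 1) = c * T * (1 + T) by ring]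
    linarith [hMfin]
  · rw [norm_smul, norm_neg, norm_div, norm_one,
      Real.norm_of_nonneg (le_of_lt hlam)]
    rw [div_mul_eq_mul_div, one_mul, div_le_iff₀ hlam]
    have he : (1 + T) * c * (1 + ‖X‖) / (lam - c * T * (T + 1)) * lam
        = lam * (1 + T) * c * (1 + ‖X‖) / (lam - c * T * (T + 1)) := by ring
    linarith [he ▸ hZfin]
end

section
/- Assume λ > cT(1+T). Then there exists a constant C (depending only on c, T, λ) such that the value function satisfies |V(X,t)| ≤ C(1+||X||²) for all X in H and t in [0,T]. -/
open MeasureTheory Set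
open scoped RealInnerProductSpace

variable {H : Type*} [NormedAddCommGroup H] [InnerProductSpace ℝ H] [CompleteSpace H]

/-- A functional with `c`-Lipschitz gradient bounded by `c` at the origin grows
at most quadratically. -/
lemma quad_growth (F : H → ℝ) (DF : H → H) (c : ℝ)
    (hF : ∀ X, HasGradientAt F (DF X) X)
    (hDF : ∀ X₁ X₂ : H, ‖DF X₁ - DF X₂‖ ≤ c * ‖X₁ - X₂‖)
    (hDF0 : ‖DF 0‖ ≤ c) (Y : H) :
    |F Y| ≤ |F 0| + c * ‖Y‖ + c / 2 * ‖Y‖ ^ 2 := by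
  have hc : 0 ≤ c := (norm_nonneg _).trans hDF0
  have hDFnorm : ∀ Z : H, ‖DF Z‖ ≤ c + c * ‖Z‖ := by
    intro Z
    have h1 := (norm_sub_norm_le (DF Z) (DF 0)).trans (hDF Z 0)
    rw [sub_zero] at h1
    linarith
  have hDFcont : Continuous DF := by
    have : LipschitzWith c.toNNReal DF :=
      LipschitzWith.of_dist_le_mul fun x y => by
        simpa [dist_eq_norm, Real.coe_toNNReal c hc] using hDF x y
    exact this.continuous
  have hderiv : ∀ s : ℝ, HasDerivAt (fun s : ℝ => F (s • Y)) ⟪DF (s • Y), Y⟫ s := by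
    intro s
    have h1 := (hF (s • Y)).hasFDerivAt
    have h2 : HasDerivAt (fun s : ℝ => s • Y) Y s := by
      simpa using (hasDerivAt_id s).smul_const Y
    have := h1.comp_hasDerivAt s h2
    simpa [InnerProductSpace.toDual_apply_apply, Function.comp_def] using this
  have hcont : Continuous fun s : ℝ => ⟪DF (s • Y), Y⟫ :=
    Continuous.inner (hDFcont.comp (continuous_id.smul continuous_const)) continuous_const
  have key : ∫ s in (0:ℝ)..1, ⟪DF (s • Y), Y⟫ = F ((1:ℝ) • Y) - F ((0:ℝ) • Y) :=
    intervalIntegral.integral_eq_sub_of_hasDerivAt (fun s _ => hderiv s)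
      (hcont.intervalIntegrable 0 1)
  have key' : F Y - F 0 = ∫ s in (0:ℝ)..1, ⟪DF (s • Y), Y⟫ := by
    rw [key, one_smul, zero_smul]
  have hbound : ∀ᵐ s ∂(volume.restrict (Set.uIoc (0:ℝ) 1)),
      ‖⟪DF (s • Y), Y⟫‖ ≤ c * ‖Y‖ + (c * ‖Y‖ ^ 2) * s := by
    refine (ae_restrict_iff' measurableSet_uIoc).mpr (Filter.Eventually.of_forall ?_)
    intro s hs
    rw [Set.uIoc_of_le (by norm_num : (0:ℝ) ≤ 1)] at hs
    have hs0 : 0 ≤ s := hs.1.le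
    have h1 : ‖⟪DF (s • Y), Y⟫‖ ≤ ‖DF (s • Y)‖ * ‖Y‖ := by
      simpa using abs_real_inner_le_norm (DF (s • Y)) Y
    have h2 : ‖DF (s • Y)‖ ≤ c + c * (s * ‖Y‖) := by
      have := hDFnorm (s • Y)
      rwa [norm_smul, Real.norm_eq_abs, abs_of_nonneg hs0] at this
    have h3 : ‖DF (s • Y)‖ * ‖Y‖ ≤ (c + c * (s * ‖Y‖)) * ‖Y‖ :=
      mul_le_mul_of_nonneg_right h2 (norm_nonneg _)
    calc ‖⟪DF (s • Y), Y⟫‖ ≤ (c + c * (s * ‖Y‖)) * ‖Y‖ := h1.trans h3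
      _ = c * ‖Y‖ + (c * ‖Y‖ ^ 2) * s := by ring
  have hmul : IntervalIntegrable (fun s : ℝ => c * ‖Y‖ ^ 2 * s) volume 0 1 := by
    apply Continuous.intervalIntegrable
    exact continuous_const.mul continuous_id
  have hgint : IntervalIntegrable (fun s : ℝ => c * ‖Y‖ + (c * ‖Y‖ ^ 2) * s) volume 0 1 :=
    intervalIntegrable_const.add hmul
  have hA : ∫ _ in (0:ℝ)..1, (c * ‖Y‖) = c * ‖Y‖ := by simp
  have hB2 : ∫ s in (0:ℝ)..1, (c * ‖Y‖ ^ 2 * s) = c * ‖Y‖ ^ 2 / 2 := by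
    rw [intervalIntegral.integral_const_mul, integral_id]
    ring
  have hgval : ∫ s in (0:ℝ)..1, (c * ‖Y‖ + (c * ‖Y‖ ^ 2) * s) = c * ‖Y‖ + c / 2 * ‖Y‖ ^ 2 := by
    rw [intervalIntegral.integral_add intervalIntegrable_const hmul, hA, hB2]
    ring
  have habs : |F Y - F 0| ≤ c * ‖Y‖ + c / 2 * ‖Y‖ ^ 2 := by
    have h := intervalIntegral.norm_integral_le_abs_of_norm_le hbound hgint
    rw [hgval] at h
    rw [key']
    calc |∫ s in (0:ℝ)..1, ⟪DF (s • Y), Y⟫| ≤ |c * ‖Y‖ + c / 2 * ‖Y‖ ^ 2| := h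
      _ = c * ‖Y‖ + c / 2 * ‖Y‖ ^ 2 := abs_of_nonneg (by positivity)
  have := abs_sub_abs_le_abs_sub (F Y) (F 0)
  linarith

/-- Cauchy–Schwarz for the interval integral of a norm. -/
lemma cs_bound (t T : ℝ) (htT : t ≤ T) (v : ℝ → H) (hv : Admissible t T v) :
    ∫ σ in t..T, ‖v σ‖ ≤ Real.sqrt (T - t) * Real.sqrt (∫ s in t..T, ‖v s‖ ^ 2) := by
  set μ := volume.restrict (Ioc t T) with hμ
  haveI : IsFiniteMeasure μ := by
    constructor
    rw [hμ, Measure.restrict_apply_univ, Real.volume_Ioc]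
    exact ENNReal.ofReal_lt_top
  have hmeas : AEStronglyMeasurable (fun s => ‖v s‖) μ :=
    ((intervalIntegrable_iff_integrableOn_Ioc_of_le htT).mp hv.1).aestronglyMeasurable.norm
  have hsqint : Integrable (fun s => ‖v s‖ ^ 2) μ :=
    (intervalIntegrable_iff_integrableOn_Ioc_of_le htT).mp hv.2
  have hmem : MemLp (fun s => ‖v s‖) (ENNReal.ofReal 2) μ := by
    have h2 : (ENNReal.ofReal 2) = 2 := by norm_num
    rw [h2]
    exact (memLp_two_iff_integrable_sq hmeas).mpr hsqint
  have hone : MemLp (fun _ : ℝ => (1:ℝ)) (ENNReal.ofReal 2) μ := memLp_const 1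
  have hconj : Real.HolderConjugate 2 2 := ⟨by norm_num, by norm_num, by norm_num⟩
  have hH := integral_mul_le_Lp_mul_Lq_of_nonneg hconj
    (Filter.Eventually.of_forall fun s => norm_nonneg (v s))
    (Filter.Eventually.of_forall fun _ => zero_le_one) hmem hone
  have e1 : ∫ a, ‖v a‖ * 1 ∂μ = ∫ a, ‖v a‖ ∂μ := by simp
  have e2 : ∫ a, ‖v a‖ ^ (2:ℝ) ∂μ = ∫ a, ‖v a‖ ^ 2 ∂μ := by
    refine integral_congr_ae (Filter.Eventually.of_forall fun a => ?_)
    show ‖v a‖ ^ (2:ℝ) = ‖v a‖ ^ 2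
    rw [show (2:ℝ) = ((2:ℕ):ℝ) by norm_num, Real.rpow_natCast]
  have e3 : ∫ _ : ℝ, (1:ℝ) ^ (2:ℝ) ∂μ = T - t := by
    simp [hμ, Real.volume_Ioc, ENNReal.toReal_ofReal (by linarith : (0:ℝ) ≤ T - t), htT]
  rw [e1, e2, e3] at hH
  have hr1 : (∫ a, ‖v a‖ ^ 2 ∂μ) ^ ((1:ℝ)/2) = Real.sqrt (∫ a, ‖v a‖ ^ 2 ∂μ) :=
    (Real.sqrt_eq_rpow _).symm
  have hr2 : (T - t) ^ ((1:ℝ)/2) = Real.sqrt (T - t) := (Real.sqrt_eq_rpow _).symm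
  rw [hr1, hr2] at hH
  rw [intervalIntegral.integral_of_le htT, intervalIntegral.integral_of_le htT]
  calc ∫ a in Ioc t T, ‖v a‖ ≤ Real.sqrt (∫ a, ‖v a‖ ^ 2 ∂μ) * Real.sqrt (T - t) := hH
    _ = Real.sqrt (T - t) * Real.sqrt (∫ a in Ioc t T, ‖v a‖ ^ 2) := by rw [mul_comm]

/-- Bound on the state norm. -/
lemma state_norm_le (X : H) (t T s : ℝ) (v : ℝ → H)
    (hv : IntervalIntegrable v volume t T) (hts : t ≤ s) (hsT : s ≤ T) :
    ‖state X t v s‖ ≤ ‖X‖ + ∫ σ in t..T, ‖v σ‖ := by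
  have htT : t ≤ T := hts.trans hsT
  have hsub : IntervalIntegrable v volume t s := by
    refine hv.mono_set ?_
    rw [Set.uIcc_of_le hts, Set.uIcc_of_le htT]
    exact Icc_subset_Icc le_rfl hsT
  calc ‖X + ∫ σ in t..s, v σ‖ ≤ ‖X‖ + ‖∫ σ in t..s, v σ‖ := norm_add_le _ _
    _ ≤ ‖X‖ + ∫ σ in t..s, ‖v σ‖ := by
        gcongr
        exact intervalIntegral.norm_integral_le_integral_norm hts
    _ ≤ ‖X‖ + ∫ σ in t..T, ‖v σ‖ := by
        gcongr
        exact intervalIntegral.integral_mono_interval le_rfl hts hsT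
          (Filter.Eventually.of_forall fun σ => norm_nonneg _) hv.norm

/-- The main arithmetic inequality. -/
lemma arith_ineq (c T lam B a r : ℝ) (hc : 0 ≤ c) (hT : 0 < T) (hB : 0 ≤ B)
    (ha : 0 ≤ a) (hr : 0 ≤ r) (hlc : c * T * (1 + T) < lam) :
    -((c ^ 2 * (T + 1) ^ 2 * T / (lam - c * T * (1 + T)) + (T + 1) * (B + c)) * (1 + a ^ 2))
      ≤ lam / (2 * T) * r ^ 2 - (T + 1) * (B + c * (a + r) + c / 2 * (a + r) ^ 2) := by
  set D := lam - c * T * (1 + T) with hDdef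
  have hD : 0 < D := by simp only [hDdef]; linarith
  rw [← sub_nonneg]
  have hEq : lam / (2 * T) * r ^ 2 - (T + 1) * (B + c * (a + r) + c / 2 * (a + r) ^ 2)
      - -((c ^ 2 * (T + 1) ^ 2 * T / D + (T + 1) * (B + c)) * (1 + a ^ 2))
      = ((D * r - c * T * (T + 1) * (1 + a)) ^ 2 + c ^ 2 * T ^ 2 * (T + 1) ^ 2 * (a - 1) ^ 2
          + 2 * T * D * (T + 1) * B * a ^ 2 + T * D * (T + 1) * c * ((a - 1) ^ 2 + 1))
        / (2 * T * D) := by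
    have hlam : lam = D + c * T * (1 + T) := by simp [hDdef]
    rw [hlam]
    field_simp
    ring
  rw [hEq]
  have h1 : 0 ≤ (D * r - c * T * (T + 1) * (1 + a)) ^ 2 := sq_nonneg _
  have h2 : 0 ≤ c ^ 2 * T ^ 2 * (T + 1) ^ 2 * (a - 1) ^ 2 := by positivity
  have h3 : 0 ≤ 2 * T * D * (T + 1) * B * a ^ 2 :=
    mul_nonneg (mul_nonneg (mul_nonneg (mul_nonneg (by linarith) hD.le) (by linarith)) hB)
      (sq_nonneg a)
  have h4 : 0 ≤ T * D * (T + 1) * c * ((a - 1) ^ 2 + 1) :=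
    mul_nonneg (mul_nonneg (mul_nonneg (mul_nonneg hT.le hD.le) (by linarith)) hc)
      (by positivity)
  have hden : 0 < 2 * T * D := mul_pos (mul_pos (by norm_num) hT) hD
  exact div_nonneg (by linarith) hden.le

set_option maxHeartbeats 1000000 in
/-- quadratic growth bound for the value function. -/
theorem statement6
    (F FT : H → ℝ) (DF DFT : H → H) (c T lam : ℝ)
    (hF : ∀ X, HasGradientAt F (DF X) X) (hFT : ∀ X, HasGradientAt FT (DFT X) X)
    (hDF : ∀ X₁ X₂ : H, ‖DF X₁ - DF X₂‖ ≤ c * ‖X₁ - X₂‖)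
    (hDFT : ∀ X₁ X₂ : H, ‖DFT X₁ - DFT X₂‖ ≤ c * ‖X₁ - X₂‖)
    (hDF0 : ‖DF 0‖ ≤ c) (hDFT0 : ‖DFT 0‖ ≤ c)
    (hT : 0 < T) (hlam : 0 < lam)
    (hlc : c * T * (1 + T) < lam) :
    ∃ C : ℝ, ∀ X : H, ∀ t ∈ Icc 0 T, |valueFn F FT lam T X t| ≤ C * (1 + ‖X‖ ^ 2) := by
  have hc : 0 ≤ c := (norm_nonneg _).trans hDF0
  set B : ℝ := |F 0| + |FT 0| with hBdef
  clear_value B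
  have hB : 0 ≤ B := by rw [hBdef]; positivity
  have hD : 0 < lam - c * T * (1 + T) := by linarith
  set C : ℝ := c ^ 2 * (T + 1) ^ 2 * T / (lam - c * T * (1 + T)) + (T + 1) * (B + c) with hCdef
  clear_value C
  refine ⟨C, ?_⟩
  intro X t ht
  obtain ⟨ht0, htT⟩ := ht
  have ha : 0 ≤ ‖X‖ := norm_nonneg X
  have hFq : ∀ Y : H, |F Y| ≤ |F 0| + c * ‖Y‖ + c / 2 * ‖Y‖ ^ 2 :=
    quad_growth F DF c hF hDF hDF0
  have hFTq : ∀ Y : H, |FT Y| ≤ |FT 0| + c * ‖Y‖ + c / 2 * ‖Y‖ ^ 2 :=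
    quad_growth FT DFT c hFT hDFT hDFT0
  -- lower bound on the cost of any admissible control
  have hlow : ∀ v : ℝ → H, Admissible t T v →
      -(C * (1 + ‖X‖ ^ 2)) ≤ cost F FT lam X t T v := by
    intro v hv
    set E : ℝ := ∫ s in t..T, ‖v s‖ ^ 2 with hEdef
    clear_value E
    have hE0 : 0 ≤ E := by
      rw [hEdef]
      exact intervalIntegral.integral_nonneg htT fun u _ => by positivity
    set r : ℝ := Real.sqrt (T * E) with hrdef
    clear_value r
    have hr0 : 0 ≤ r := by rw [hrdef]; exact Real.sqrt_nonneg _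
    have hr2 : r ^ 2 = T * E := by rw [hrdef]; exact Real.sq_sqrt (mul_nonneg hT.le hE0)
    have hNr : ∫ σ in t..T, ‖v σ‖ ≤ r := by
      rw [hrdef, hEdef]
      calc ∫ σ in t..T, ‖v σ‖
          ≤ Real.sqrt (T - t) * Real.sqrt (∫ s in t..T, ‖v s‖ ^ 2) := cs_bound t T htT v hv
        _ ≤ Real.sqrt T * Real.sqrt (∫ s in t..T, ‖v s‖ ^ 2) :=
            mul_le_mul_of_nonneg_right (Real.sqrt_le_sqrt (by linarith)) (Real.sqrt_nonneg _)
        _ = Real.sqrt (T * ∫ s in t..T, ‖v s‖ ^ 2) := (Real.sqrt_mul hT.le _).symm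
    have hstate : ∀ s, t ≤ s → s ≤ T → ‖state X t v s‖ ≤ ‖X‖ + r := by
      intro s h1 h2
      have := state_norm_le X t T s v hv.1 h1 h2
      linarith
    set K : ℝ := B + c * (‖X‖ + r) + c / 2 * (‖X‖ + r) ^ 2 with hKdef
    clear_value K
    have hK0 : 0 ≤ K := by
      have h1 : 0 ≤ c * (‖X‖ + r) := mul_nonneg hc (by linarith)
      have h2 : 0 ≤ c / 2 * (‖X‖ + r) ^ 2 := mul_nonneg (by linarith) (sq_nonneg _)
      rw [hKdef]; linarith
    have hFbd : ∀ s, t ≤ s → s ≤ T → |F (state X t v s)| ≤ K := by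
      intro s h1 h2
      have h3 := hFq (state X t v s)
      have h4 := hstate s h1 h2
      have h5 : ‖state X t v s‖ ^ 2 ≤ (‖X‖ + r) ^ 2 :=
        pow_le_pow_left₀ (norm_nonneg _) h4 2
      have h6 : c * ‖state X t v s‖ ≤ c * (‖X‖ + r) := mul_le_mul_of_nonneg_left h4 hc
      have h7 : c / 2 * ‖state X t v s‖ ^ 2 ≤ c / 2 * (‖X‖ + r) ^ 2 :=
        mul_le_mul_of_nonneg_left h5 (by linarith)
      have h8 : |F 0| ≤ B := by rw [hBdef]; linarith [abs_nonneg (FT 0)]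
      rw [hKdef]; linarith
    have hFTbd : -K ≤ FT (state X t v T) := by
      have h3 := hFTq (state X t v T)
      have h4 := hstate T htT le_rfl
      have h5 : ‖state X t v T‖ ^ 2 ≤ (‖X‖ + r) ^ 2 :=
        pow_le_pow_left₀ (norm_nonneg _) h4 2
      have h6 : c * ‖state X t v T‖ ≤ c * (‖X‖ + r) := mul_le_mul_of_nonneg_left h4 hc
      have h7 : c / 2 * ‖state X t v T‖ ^ 2 ≤ c / 2 * (‖X‖ + r) ^ 2 :=
        mul_le_mul_of_nonneg_left h5 (by linarith)
      have h8 : |FT 0| ≤ B := by rw [hBdef]; linarith [abs_nonneg (F 0)]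
      have h9 := (abs_le.mp h3).1
      rw [hKdef]; linarith
    have hIF : -(K * T) ≤ ∫ s in t..T, F (state X t v s) := by
      have h1 : ‖∫ s in t..T, F (state X t v s)‖ ≤ K * |T - t| := by
        apply intervalIntegral.norm_integral_le_of_norm_le_const
        intro x hx
        rw [Set.uIoc_of_le htT] at hx
        exact hFbd x hx.1.le hx.2
      rw [Real.norm_eq_abs, abs_of_nonneg (by linarith : (0:ℝ) ≤ T - t)] at h1
      have h2 : K * (T - t) ≤ K * T := mul_le_mul_of_nonneg_left (by linarith) hK0
      have h9 := (abs_le.mp h1).1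
      linarith
    have hcost : lam / 2 * E + -(K * T) + -K ≤ cost F FT lam X t T v := by
      unfold cost
      rw [← hEdef]
      exact add_le_add (add_le_add le_rfl hIF) hFTbd
    have hE2 : lam / 2 * E = lam / (2 * T) * r ^ 2 := by
      rw [hr2]
      field_simp
    have harith := arith_ineq c T lam B ‖X‖ r hc hT hB ha hr0 hlc
    rw [← hCdef, ← hKdef] at harith
    rw [hE2] at hcost
    have hTK : (T + 1) * K = K * T + K := by ring
    linarith
  -- the zero control
  have hadm0 : Admissible t T (fun _ : ℝ => (0:H)) := by
    constructor
    · exact intervalIntegrable_const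
    · simpa using (intervalIntegrable_const :
        IntervalIntegrable (fun _ : ℝ => (0:ℝ)) volume t T)
  have hstate0 : ∀ s : ℝ, state X t (fun _ => (0:H)) s = X := by
    intro s
    simp [state]
  have hcost0 : cost F FT lam X t T (fun _ => (0:H)) = (T - t) * F X + FT X := by
    unfold cost
    simp only [hstate0]
    simp [intervalIntegral.integral_const, smul_eq_mul]
  have hup : cost F FT lam X t T (fun _ => (0:H)) ≤ C * (1 + ‖X‖ ^ 2) := by
    rw [hcost0]
    have h1 := hFq X
    have h2 := hFTq X
    have h3 : (T - t) * F X ≤ T * |F X| := by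
      calc (T - t) * F X ≤ (T - t) * |F X| :=
            mul_le_mul_of_nonneg_left (le_abs_self _) (by linarith)
        _ ≤ T * |F X| := mul_le_mul_of_nonneg_right (by linarith) (abs_nonneg _)
    have h4 : FT X ≤ |FT X| := le_abs_self _
    have hq : c * ‖X‖ + c / 2 * ‖X‖ ^ 2 ≤ c * (1 + ‖X‖ ^ 2) := by
      nlinarith [mul_nonneg hc (sq_nonneg (‖X‖ - 1))]
    have h5 : T * |F X| ≤ T * (|F 0| + c * ‖X‖ + c / 2 * ‖X‖ ^ 2) :=
      mul_le_mul_of_nonneg_left h1 hT.le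
    have h6 : (T + 1) * (B + c * (1 + ‖X‖ ^ 2)) ≤ (T + 1) * (B + c) * (1 + ‖X‖ ^ 2) := by
      nlinarith [mul_nonneg (mul_nonneg (by linarith : (0:ℝ) ≤ T + 1) hB) (sq_nonneg ‖X‖)]
    have h7 : (T + 1) * (B + c) * (1 + ‖X‖ ^ 2) ≤ C * (1 + ‖X‖ ^ 2) := by
      rw [hCdef]
      have h8 : 0 ≤ c ^ 2 * (T + 1) ^ 2 * T / (lam - c * T * (1 + T)) :=
        div_nonneg (mul_nonneg (mul_nonneg (sq_nonneg c) (sq_nonneg (T + 1))) hT.le) hD.le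
      nlinarith [mul_nonneg h8 (by positivity : (0:ℝ) ≤ 1 + ‖X‖ ^ 2)]
    have h9 : |F 0| ≤ B := by rw [hBdef]; linarith [abs_nonneg (FT 0)]
    have h10 : |FT 0| ≤ B := by rw [hBdef]; linarith [abs_nonneg (F 0)]
    have hq2 : T * (c * ‖X‖ + c / 2 * ‖X‖ ^ 2) ≤ T * (c * (1 + ‖X‖ ^ 2)) :=
      mul_le_mul_of_nonneg_left hq hT.le
    have h9T : T * |F 0| ≤ T * B := mul_le_mul_of_nonneg_left h9 hT.le
    linarith [h3, h4, h2, h5, hq2, h9T, h10, h6, h7]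
  -- conclude
  have hne : ((fun v => cost F FT lam X t T v) '' {v : ℝ → H | Admissible t T v}).Nonempty :=
    ⟨cost F FT lam X t T (fun _ => (0:H)), ⟨fun _ => (0:H), hadm0, rfl⟩⟩
  have hbdd : BddBelow ((fun v => cost F FT lam X t T v) '' {v : ℝ → H | Admissible t T v}) := by
    refine ⟨-(C * (1 + ‖X‖ ^ 2)), ?_⟩
    rintro x ⟨v, hv, rfl⟩
    exact hlow v hv
  unfold valueFn
  rw [abs_le]
  constructor
  · exact le_csInf hne (by rintro x ⟨v, hv, rfl⟩; exact hlow v hv)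
  · exact (csInf_le hbdd ⟨fun _ => (0:H), hadm0, rfl⟩).trans hup
end

section
/- Assume λ > cT(1+T). For initial data (X₁,t₁) and (X₂,t₂) in H×[0,T], let Y_{X₁t₁}(.) and Y_{X₂t₂}(.) denote the corresponding optimal trajectories (the unique solutions of the two-point boundary value problem). Then sup over s in [max(t₁,t₂),T] of ||Y_{X₁t₁}(s) − Y_{X₂t₂}(s)|| is at most (λ/(λ−cT(T+1))) ( ||X₁−X₂|| + |t₂−t₁| (1+T) c (1 + max(||X₁||,||X₂||)) / (λ−cT(T+1)) ). In particular, for t₁ = t₂ = t, sup_{t≤s≤T} ||Y_{X₁t}(s) − Y_{X₂t}(s)|| ≤ λ ||X₁−X₂|| / (λ−cT(T+1)). -/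
open MeasureTheory Set
open scoped RealInnerProductSpace

variable {H : Type*} [NormedAddCommGroup H] [InnerProductSpace ℝ H] [CompleteSpace H]

lemma grad_bound {DG : H → H} {c : ℝ}
    (hDG : ∀ X₁ X₂ : H, ‖DG X₁ - DG X₂‖ ≤ c * ‖X₁ - X₂‖) (h0 : ‖DG 0‖ ≤ c) (u : H) :
    ‖DG u‖ ≤ c * (1 + ‖u‖) := by
  have h1 := hDG u 0
  simp only [sub_zero] at h1
  have h2 := norm_sub_norm_le (DG u) (DG 0)
  nlinarith [norm_nonneg (DG 0)]

lemma lip_continuous {DG : H → H} {c : ℝ}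
    (hDG : ∀ X₁ X₂ : H, ‖DG X₁ - DG X₂‖ ≤ c * ‖X₁ - X₂‖) (hc : 0 ≤ c) :
    Continuous DG := by
  refine (LipschitzWith.of_dist_le_mul (K := ⟨c, hc⟩) ?_).continuous
  intro x y
  rw [dist_eq_norm, dist_eq_norm]
  exact hDG x y

lemma self_bound (DF DFT : H → H) (c T lam : ℝ)
    (hDF : ∀ X₁ X₂ : H, ‖DF X₁ - DF X₂‖ ≤ c * ‖X₁ - X₂‖)
    (hDFT : ∀ X₁ X₂ : H, ‖DFT X₁ - DFT X₂‖ ≤ c * ‖X₁ - X₂‖)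
    (hDF0 : ‖DF 0‖ ≤ c) (hDFT0 : ‖DFT 0‖ ≤ c)
    (hT : 0 < T) (hlam : 0 < lam) (hlc : c * T * (1 + T) < lam)
    (X : H) (t : ℝ) (ht : t ∈ Icc 0 T) (Y : ℝ → H)
    (hY : IsOptimalPath DF DFT lam T X t Y) :
    ∀ s ∈ Icc t T, ‖Y s - X‖ ≤ (s - t) * (c * (1 + T) * (1 + ‖X‖) / (lam - c * T * (1 + T))) := by
  have hc : 0 ≤ c := le_trans (norm_nonneg _) hDF0
  have htT : t ≤ T := ht.2
  have hD : 0 < lam - c * T * (1 + T) := by linarith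
  obtain ⟨s₀, hs₀, hmax⟩ := isCompact_Icc.exists_isMaxOn (s := Icc t T)
    ⟨t, left_mem_Icc.2 htT⟩ hY.1.norm
  set N := ‖Y s₀‖ with hN
  have hNmem : ∀ σ ∈ Icc t T, ‖Y σ‖ ≤ N := fun σ hσ => hmax hσ
  have hN0 : 0 ≤ N := norm_nonneg _
  have h1T : (0:ℝ) ≤ 1 + T := by linarith
  have hZ : ∀ σ ∈ Icc t T, ‖adjZ DF DFT T Y σ‖ ≤ c * (1 + T) * (1 + N) := by
    intro σ hσ
    have h1 : ‖DFT (Y T)‖ ≤ c * (1 + N) := by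
      have hg := grad_bound hDFT hDFT0 (Y T)
      have hYT : ‖Y T‖ ≤ N := hNmem T (right_mem_Icc.2 htT)
      nlinarith
    have h2 : ‖∫ ρ in σ..T, DF (Y ρ)‖ ≤ c * (1 + N) * T := by
      have hb : ∀ ρ ∈ uIoc σ T, ‖DF (Y ρ)‖ ≤ c * (1 + N) := by
        intro ρ hρ
        rw [uIoc_of_le hσ.2] at hρ
        have hρ' : ρ ∈ Icc t T := ⟨le_trans hσ.1 hρ.1.le, hρ.2⟩
        have hg := grad_bound hDF hDF0 (Y ρ)
        have hm := hNmem ρ hρ'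
        nlinarith
      have hI := intervalIntegral.norm_integral_le_of_norm_le_const hb
      have habs : |T - σ| ≤ T := by
        rw [abs_of_nonneg (by linarith [hσ.2])]
        linarith [hσ.1, ht.1]
      calc ‖∫ ρ in σ..T, DF (Y ρ)‖ ≤ c * (1 + N) * |T - σ| := hI
        _ ≤ c * (1 + N) * T := by
            exact mul_le_mul_of_nonneg_left habs (by positivity)
    calc ‖adjZ DF DFT T Y σ‖ ≤ ‖DFT (Y T)‖ + ‖∫ ρ in σ..T, DF (Y ρ)‖ := norm_add_le _ _
      _ ≤ c * (1 + N) + c * (1 + N) * T := add_le_add h1 h2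
      _ = c * (1 + T) * (1 + N) := by ring
  have hdb : ∀ σ ∈ Icc t T, ‖-(1 / lam) • adjZ DF DFT T Y σ‖ ≤ c * (1 + T) * (1 + N) / lam := by
    intro σ hσ
    rw [norm_smul, Real.norm_eq_abs, abs_neg, abs_of_pos (by positivity : (0:ℝ) < 1 / lam)]
    calc 1 / lam * ‖adjZ DF DFT T Y σ‖ ≤ 1 / lam * (c * (1 + T) * (1 + N)) :=
          mul_le_mul_of_nonneg_left (hZ σ hσ) (by positivity)
      _ = c * (1 + T) * (1 + N) / lam := by ring
  have hmvt : ∀ a ∈ Icc t T, ∀ b ∈ Icc t T,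
      ‖Y b - Y a‖ ≤ (c * (1 + T) * (1 + N) / lam) * ‖b - a‖ :=
    fun a ha b hb =>
      (convex_Icc t T).norm_image_sub_le_of_norm_hasDerivWithin_le hY.2.2 hdb ha hb
  have hl0 : lam ≠ 0 := ne_of_gt hlam
  have hKey : (lam - c * T * (1 + T)) * (1 + N) ≤ lam * (1 + ‖X‖) := by
    have h := hmvt t (left_mem_Icc.2 htT) s₀ hs₀
    rw [hY.2.1] at h
    have hs0T : ‖s₀ - t‖ ≤ T := by
      rw [Real.norm_eq_abs, abs_of_nonneg (by linarith [hs₀.1])]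
      linarith [hs₀.2, ht.1]
    have hC : (0:ℝ) ≤ c * (1 + T) * (1 + N) / lam := by positivity
    have h2 : N ≤ ‖X‖ + (c * (1 + T) * (1 + N) / lam) * T := by
      have htri := norm_sub_norm_le (Y s₀) X
      nlinarith [mul_le_mul_of_nonneg_left hs0T hC]
    have h2' : lam * N ≤ lam * ‖X‖ + c * (1 + T) * (1 + N) * T := by
      have h3 := mul_le_mul_of_nonneg_left h2 hlam.le
      calc lam * N ≤ lam * (‖X‖ + c * (1 + T) * (1 + N) / lam * T) := h3
        _ = lam * ‖X‖ + c * (1 + T) * (1 + N) * T := by field_simp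
    nlinarith [h2']
  intro s hs
  have h := hmvt t (left_mem_Icc.2 htT) s hs
  rw [hY.2.1] at h
  have hns : ‖s - t‖ = s - t := by
    rw [Real.norm_eq_abs, abs_of_nonneg (by linarith [hs.1])]
  rw [hns] at h
  have hCle : c * (1 + T) * (1 + N) / lam ≤ c * (1 + T) * (1 + ‖X‖) / (lam - c * T * (1 + T)) := by
    rw [div_le_div_iff₀ hlam hD]
    nlinarith [mul_le_mul_of_nonneg_left hKey (mul_nonneg hc h1T)]
  calc ‖Y s - X‖ ≤ c * (1 + T) * (1 + N) / lam * (s - t) := h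
    _ ≤ (s - t) * (c * (1 + T) * (1 + ‖X‖) / (lam - c * T * (1 + T))) := by
        rw [mul_comm]
        exact mul_le_mul_of_nonneg_left hCle (by linarith [hs.1])

/-- Lipschitz dependence of the optimal trajectories on the initial data. -/
theorem statement7
    (F FT : H → ℝ) (DF DFT : H → H) (c T lam : ℝ)
    (hF : ∀ X, HasGradientAt F (DF X) X) (hFT : ∀ X, HasGradientAt FT (DFT X) X)
    (hDF : ∀ X₁ X₂ : H, ‖DF X₁ - DF X₂‖ ≤ c * ‖X₁ - X₂‖)
    (hDFT : ∀ X₁ X₂ : H, ‖DFT X₁ - DFT X₂‖ ≤ c * ‖X₁ - X₂‖)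
    (hDF0 : ‖DF 0‖ ≤ c) (hDFT0 : ‖DFT 0‖ ≤ c)
    (hT : 0 < T) (hlam : 0 < lam)
    (hlc : c * T * (1 + T) < lam)
    (X₁ X₂ : H) (t₁ t₂ : ℝ) (ht₁ : t₁ ∈ Icc 0 T) (ht₂ : t₂ ∈ Icc 0 T)
    (Y₁ Y₂ : ℝ → H)
    (hY₁ : IsOptimalPath DF DFT lam T X₁ t₁ Y₁)
    (hY₂ : IsOptimalPath DF DFT lam T X₂ t₂ Y₂) :
    (∀ s ∈ Icc (max t₁ t₂) T,
      ‖Y₁ s - Y₂ s‖ ≤ lam / (lam - c * T * (T + 1)) *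
        (‖X₁ - X₂‖ +
          |t₂ - t₁| * (1 + T) * c * (1 + max ‖X₁‖ ‖X₂‖) / (lam - c * T * (T + 1)))) ∧
    (t₁ = t₂ → ∀ s ∈ Icc t₁ T,
      ‖Y₁ s - Y₂ s‖ ≤ lam * ‖X₁ - X₂‖ / (lam - c * T * (T + 1))) := by
  have hc : 0 ≤ c := le_trans (norm_nonneg _) hDF0
  have hl0 : lam ≠ 0 := ne_of_gt hlam
  have hDeq : lam - c * T * (T + 1) = lam - c * T * (1 + T) := by ring
  have hD : 0 < lam - c * T * (T + 1) := by rw [hDeq]; linarith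
  have h1T : (0:ℝ) ≤ 1 + T := by linarith
  set τ := max t₁ t₂ with hτdef
  have hτT : τ ≤ T := max_le ht₁.2 ht₂.2
  have hτ0 : 0 ≤ τ := le_trans ht₁.1 (le_max_left _ _)
  have hsub1 : Icc τ T ⊆ Icc t₁ T := Icc_subset_Icc (le_max_left _ _) le_rfl
  have hsub2 : Icc τ T ⊆ Icc t₂ T := Icc_subset_Icc (le_max_right _ _) le_rfl
  have hcont : ContinuousOn (fun s => Y₁ s - Y₂ s) (Icc τ T) :=
    (hY₁.1.mono hsub1).sub (hY₂.1.mono hsub2)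
  obtain ⟨s₀, hs₀, hmax⟩ := isCompact_Icc.exists_isMaxOn (s := Icc τ T)
    ⟨T, right_mem_Icc.2 hτT⟩ hcont.norm
  set M := ‖Y₁ s₀ - Y₂ s₀‖ with hM
  have hMb : ∀ s ∈ Icc τ T, ‖Y₁ s - Y₂ s‖ ≤ M := fun s hs => hmax hs
  have hM0 : 0 ≤ M := norm_nonneg _
  have hDFc : Continuous DF := lip_continuous hDF hc
  have hZd : ∀ σ ∈ Icc τ T,
      ‖adjZ DF DFT T Y₁ σ - adjZ DF DFT T Y₂ σ‖ ≤ c * (1 + T) * M := by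
    intro σ hσ
    have hσT : σ ≤ T := hσ.2
    have huIcc : uIcc σ T ⊆ Icc τ T := by
      rw [uIcc_of_le hσT]; exact Icc_subset_Icc hσ.1 le_rfl
    have hint1 : IntervalIntegrable (fun ρ => DF (Y₁ ρ)) volume σ T :=
      (hDFc.comp_continuousOn ((hY₁.1.mono hsub1).mono huIcc)).intervalIntegrable
    have hint2 : IntervalIntegrable (fun ρ => DF (Y₂ ρ)) volume σ T :=
      (hDFc.comp_continuousOn ((hY₂.1.mono hsub2).mono huIcc)).intervalIntegrable
    have hI : (∫ ρ in σ..T, DF (Y₁ ρ)) - (∫ ρ in σ..T, DF (Y₂ ρ))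
        = ∫ ρ in σ..T, (DF (Y₁ ρ) - DF (Y₂ ρ)) :=
      (intervalIntegral.integral_sub hint1 hint2).symm
    have hb : ∀ ρ ∈ uIoc σ T, ‖DF (Y₁ ρ) - DF (Y₂ ρ)‖ ≤ c * M := by
      intro ρ hρ
      rw [uIoc_of_le hσT] at hρ
      have hρ' : ρ ∈ Icc τ T := ⟨le_trans hσ.1 hρ.1.le, hρ.2⟩
      calc ‖DF (Y₁ ρ) - DF (Y₂ ρ)‖ ≤ c * ‖Y₁ ρ - Y₂ ρ‖ := hDF _ _
        _ ≤ c * M := mul_le_mul_of_nonneg_left (hMb ρ hρ') hc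
    have h2 : ‖∫ ρ in σ..T, (DF (Y₁ ρ) - DF (Y₂ ρ))‖ ≤ c * M * T := by
      have hI2 := intervalIntegral.norm_integral_le_of_norm_le_const hb
      have habs : |T - σ| ≤ T := by
        rw [abs_of_nonneg (by linarith)]
        linarith [hσ.1]
      calc ‖∫ ρ in σ..T, (DF (Y₁ ρ) - DF (Y₂ ρ))‖ ≤ c * M * |T - σ| := hI2
        _ ≤ c * M * T := mul_le_mul_of_nonneg_left habs (mul_nonneg hc hM0)
    have h1 : ‖DFT (Y₁ T) - DFT (Y₂ T)‖ ≤ c * M :=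
      le_trans (hDFT _ _) (mul_le_mul_of_nonneg_left (hMb T (right_mem_Icc.2 hτT)) hc)
    have hsplit : adjZ DF DFT T Y₁ σ - adjZ DF DFT T Y₂ σ
        = (DFT (Y₁ T) - DFT (Y₂ T))
          + ((∫ ρ in σ..T, DF (Y₁ ρ)) - ∫ ρ in σ..T, DF (Y₂ ρ)) := by
      simp only [adjZ]; abel
    rw [hsplit, hI]
    calc ‖(DFT (Y₁ T) - DFT (Y₂ T)) + ∫ ρ in σ..T, (DF (Y₁ ρ) - DF (Y₂ ρ))‖
        ≤ ‖DFT (Y₁ T) - DFT (Y₂ T)‖ + ‖∫ ρ in σ..T, (DF (Y₁ ρ) - DF (Y₂ ρ))‖ :=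
          norm_add_le _ _
      _ ≤ c * M + c * M * T := add_le_add h1 h2
      _ = c * (1 + T) * M := by ring
  have hder : ∀ s ∈ Icc τ T, HasDerivWithinAt (fun u => Y₁ u - Y₂ u)
      ((-(1 / lam) • adjZ DF DFT T Y₁ s) - (-(1 / lam) • adjZ DF DFT T Y₂ s)) (Icc τ T) s :=
    fun s hs => ((hY₁.2.2 s (hsub1 hs)).mono hsub1).sub ((hY₂.2.2 s (hsub2 hs)).mono hsub2)
  have hdb : ∀ s ∈ Icc τ T,
      ‖(-(1 / lam) • adjZ DF DFT T Y₁ s) - (-(1 / lam) • adjZ DF DFT T Y₂ s)‖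
        ≤ c * (1 + T) * M / lam := by
    intro s hs
    rw [← smul_sub, norm_smul, Real.norm_eq_abs, abs_neg,
      abs_of_pos (by positivity : (0:ℝ) < 1 / lam)]
    calc 1 / lam * ‖adjZ DF DFT T Y₁ s - adjZ DF DFT T Y₂ s‖
        ≤ 1 / lam * (c * (1 + T) * M) :=
          mul_le_mul_of_nonneg_left (hZd s hs) (by positivity)
      _ = c * (1 + T) * M / lam := by ring
  have hkey := (convex_Icc τ T).norm_image_sub_le_of_norm_hasDerivWithin_le hder hdb
    (left_mem_Icc.2 hτT) hs₀
  have hMτ : M ≤ lam * ‖Y₁ τ - Y₂ τ‖ / (lam - c * T * (T + 1)) := by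
    have h1 : M - ‖Y₁ τ - Y₂ τ‖ ≤ ‖(Y₁ s₀ - Y₂ s₀) - (Y₁ τ - Y₂ τ)‖ :=
      norm_sub_norm_le _ _
    have hsn : ‖s₀ - τ‖ ≤ T := by
      rw [Real.norm_eq_abs, abs_of_nonneg (by linarith [hs₀.1])]
      linarith [hs₀.2]
    have hC : (0:ℝ) ≤ c * (1 + T) * M / lam := by positivity
    have h2 : M ≤ ‖Y₁ τ - Y₂ τ‖ + c * (1 + T) * M / lam * T := by
      nlinarith [hkey, mul_le_mul_of_nonneg_left hsn hC]
    rw [le_div_iff₀ hD]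
    have h3 : lam * M ≤ lam * ‖Y₁ τ - Y₂ τ‖ + c * (1 + T) * M * T := by
      have h4 := mul_le_mul_of_nonneg_left h2 hlam.le
      calc lam * M ≤ lam * (‖Y₁ τ - Y₂ τ‖ + c * (1 + T) * M / lam * T) := h4
        _ = lam * ‖Y₁ τ - Y₂ τ‖ + c * (1 + T) * M * T := by field_simp
    nlinarith [h3]
  have hτb : ‖Y₁ τ - Y₂ τ‖ ≤ ‖X₁ - X₂‖
      + |t₂ - t₁| * (1 + T) * c * (1 + max ‖X₁‖ ‖X₂‖) / (lam - c * T * (T + 1)) := by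
    rcases le_total t₁ t₂ with h | h
    · have hτeq : τ = t₂ := max_eq_right h
      have hsb := self_bound DF DFT c T lam hDF hDFT hDF0 hDFT0 hT hlam hlc X₁ t₁ ht₁ Y₁ hY₁
        t₂ ⟨h, ht₂.2⟩
      rw [hτeq, hY₂.2.1]
      have htri : ‖Y₁ t₂ - X₂‖ ≤ ‖X₁ - X₂‖ + ‖Y₁ t₂ - X₁‖ := by
        have h5 := norm_add_le (Y₁ t₂ - X₁) (X₁ - X₂)
        have h6 : (Y₁ t₂ - X₁) + (X₁ - X₂) = Y₁ t₂ - X₂ := by abel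
        rw [h6] at h5
        linarith
      have hb2 : (t₂ - t₁) * (c * (1 + T) * (1 + ‖X₁‖) / (lam - c * T * (1 + T)))
          ≤ |t₂ - t₁| * (1 + T) * c * (1 + max ‖X₁‖ ‖X₂‖) / (lam - c * T * (T + 1)) := by
        rw [abs_of_nonneg (sub_nonneg.2 h), ← hDeq, ← mul_div_assoc,
          div_le_div_iff₀ hD hD]
        have hmax1 : ‖X₁‖ ≤ max ‖X₁‖ ‖X₂‖ := le_max_left _ _
        have hnn : (0:ℝ) ≤ (t₂ - t₁) * (c * (1 + T)) :=
          mul_nonneg (sub_nonneg.2 h) (mul_nonneg hc h1T)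
        nlinarith [mul_le_mul_of_nonneg_left (show 1 + ‖X₁‖ ≤ 1 + max ‖X₁‖ ‖X₂‖ by linarith) hnn,
          mul_pos hD hD]
      linarith [htri, hsb, hb2]
    · have hτeq : τ = t₁ := max_eq_left h
      have hsb := self_bound DF DFT c T lam hDF hDFT hDF0 hDFT0 hT hlam hlc X₂ t₂ ht₂ Y₂ hY₂
        t₁ ⟨h, ht₁.2⟩
      rw [hτeq, hY₁.2.1]
      have htri : ‖X₁ - Y₂ t₁‖ ≤ ‖X₁ - X₂‖ + ‖Y₂ t₁ - X₂‖ := by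
        have h5 := norm_add_le (X₁ - X₂) (X₂ - Y₂ t₁)
        have h6 : (X₁ - X₂) + (X₂ - Y₂ t₁) = X₁ - Y₂ t₁ := by abel
        rw [h6] at h5
        rw [norm_sub_rev (Y₂ t₁) X₂]
        linarith
      have hb2 : (t₁ - t₂) * (c * (1 + T) * (1 + ‖X₂‖) / (lam - c * T * (1 + T)))
          ≤ |t₂ - t₁| * (1 + T) * c * (1 + max ‖X₁‖ ‖X₂‖) / (lam - c * T * (T + 1)) := by
        rw [abs_sub_comm, abs_of_nonneg (sub_nonneg.2 h), ← hDeq, ← mul_div_assoc,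
          div_le_div_iff₀ hD hD]
        have hmax1 : ‖X₂‖ ≤ max ‖X₁‖ ‖X₂‖ := le_max_right _ _
        have hnn : (0:ℝ) ≤ (t₁ - t₂) * (c * (1 + T)) :=
          mul_nonneg (sub_nonneg.2 h) (mul_nonneg hc h1T)
        nlinarith [mul_le_mul_of_nonneg_left (show 1 + ‖X₂‖ ≤ 1 + max ‖X₁‖ ‖X₂‖ by linarith) hnn,
          mul_pos hD hD]
      linarith [htri, hsb, hb2]
  constructor
  · intro s hs
    have h1 : ‖Y₁ s - Y₂ s‖ ≤ M := hMb s hs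
    have h2 : lam * ‖Y₁ τ - Y₂ τ‖ / (lam - c * T * (T + 1))
        ≤ lam / (lam - c * T * (T + 1)) *
          (‖X₁ - X₂‖ + |t₂ - t₁| * (1 + T) * c * (1 + max ‖X₁‖ ‖X₂‖)
            / (lam - c * T * (T + 1))) := by
      rw [div_mul_eq_mul_div]
      gcongr
    linarith [hMτ]
  · intro heq
    have hττ : τ = t₁ := by rw [hτdef, heq, max_self]
    have hττ2 : |t₂ - t₁| = 0 := by rw [← heq, sub_self, abs_zero]
    intro s hs
    have h1 : ‖Y₁ s - Y₂ s‖ ≤ M := hMb s (by rw [hττ]; exact hs)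
    have h2 := hMτ
    have hY2t : Y₂ t₁ = X₂ := by rw [heq]; exact hY₂.2.1
    rw [hττ, hY₁.2.1, hY2t] at h2
    linarith [h1, h2]
end

section
/- Assume λ > cT(1+T). For initial data (X₁,t) and (X₂,t) in H×[0,T], the adjoint trajectories satisfy sup_{t≤s≤T} ||Z_{X₁t}(s) − Z_{X₂t}(s)|| ≤ c(T+1) λ ||X₁−X₂|| / (λ − cT(T+1)). -/
open MeasureTheory Set
open scoped RealInnerProductSpace

variable {H : Type*} [NormedAddCommGroup H] [InnerProductSpace ℝ H] [CompleteSpace H]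

/-- Lipschitz dependence of the adjoint trajectories on the initial state. -/
theorem statement8
    (F FT : H → ℝ) (DF DFT : H → H) (c T lam : ℝ)
    (hF : ∀ X, HasGradientAt F (DF X) X) (hFT : ∀ X, HasGradientAt FT (DFT X) X)
    (hDF : ∀ X₁ X₂ : H, ‖DF X₁ - DF X₂‖ ≤ c * ‖X₁ - X₂‖)
    (hDFT : ∀ X₁ X₂ : H, ‖DFT X₁ - DFT X₂‖ ≤ c * ‖X₁ - X₂‖)
    (hDF0 : ‖DF 0‖ ≤ c) (hDFT0 : ‖DFT 0‖ ≤ c)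
    (hT : 0 < T) (hlam : 0 < lam)
    (hlc : c * T * (1 + T) < lam)
    (X₁ X₂ : H) (t : ℝ) (ht : t ∈ Icc 0 T)
    (Y₁ Y₂ : ℝ → H)
    (hY₁ : IsOptimalPath DF DFT lam T X₁ t Y₁)
    (hY₂ : IsOptimalPath DF DFT lam T X₂ t Y₂) :
    ∀ s ∈ Icc t T,
      ‖adjZ DF DFT T Y₁ s - adjZ DF DFT T Y₂ s‖ ≤
        c * (T + 1) * lam * ‖X₁ - X₂‖ / (lam - c * T * (T + 1)) := by
  have hc : 0 ≤ c := le_trans (norm_nonneg _) hDF0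
  have htT : t ≤ T := ht.2
  have ht0 : 0 ≤ t := ht.1
  -- continuity of difference
  have hWcont : ContinuousOn (fun s => ‖Y₁ s - Y₂ s‖) (Icc t T) :=
    ((hY₁.1.sub hY₂.1).norm)
  obtain ⟨s₀, hs₀, hmax⟩ := isCompact_Icc.exists_isMaxOn (nonempty_Icc.2 htT) hWcont
  set M := ‖Y₁ s₀ - Y₂ s₀‖ with hM
  have hM0 : 0 ≤ M := norm_nonneg _
  have hYb : ∀ σ ∈ Icc t T, ‖Y₁ σ - Y₂ σ‖ ≤ M := fun σ hσ => hmax hσ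
  -- pointwise bound on Z difference
  have hZb : ∀ s ∈ Icc t T,
      ‖adjZ DF DFT T Y₁ s - adjZ DF DFT T Y₂ s‖ ≤ c * (1 + T) * M := by
    intro s hs
    have hsub : ∀ σ ∈ Set.uIoc s T, ‖DF (Y₁ σ) - DF (Y₂ σ)‖ ≤ c * M := by
      intro σ hσ
      have hσ' : σ ∈ Icc t T := by
        rw [Set.uIoc_of_le hs.2] at hσ
        exact ⟨le_trans hs.1 (le_of_lt hσ.1), hσ.2⟩
      exact le_trans (hDF _ _) (by
        have := hYb σ hσ'
        nlinarith)
    have hDFc : Continuous DF := by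
      have : LipschitzWith c.toNNReal DF := by
        apply LipschitzWith.of_dist_le_mul
        intro x y
        simpa [dist_eq_norm, Real.coe_toNNReal c hc] using hDF x y
      exact this.continuous
    have hi₁ : IntervalIntegrable (fun σ => DF (Y₁ σ)) volume s T :=
      (hDFc.comp_continuousOn (hY₁.1.mono (by
        rw [Set.uIcc_of_le hs.2]; exact Icc_subset_Icc hs.1 le_rfl))).intervalIntegrable
    have hi₂ : IntervalIntegrable (fun σ => DF (Y₂ σ)) volume s T :=
      (hDFc.comp_continuousOn (hY₂.1.mono (by
        rw [Set.uIcc_of_le hs.2]; exact Icc_subset_Icc hs.1 le_rfl))).intervalIntegrable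
    have hint : ‖∫ σ in s..T, (DF (Y₁ σ) - DF (Y₂ σ))‖ ≤ c * M * |T - s| :=
      intervalIntegral.norm_integral_le_of_norm_le_const hsub
    have habs : |T - s| ≤ T := by
      rw [abs_of_nonneg (by linarith [hs.2])]
      linarith [hs.1, ht0]
    have hDFTb : ‖DFT (Y₁ T) - DFT (Y₂ T)‖ ≤ c * M :=
      le_trans (hDFT _ _) (by
        have := hYb T ⟨htT, le_rfl⟩
        nlinarith)
    have hcM : 0 ≤ c * M := mul_nonneg hc hM0
    calc ‖adjZ DF DFT T Y₁ s - adjZ DF DFT T Y₂ s‖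
        = ‖(DFT (Y₁ T) - DFT (Y₂ T)) + ∫ σ in s..T, (DF (Y₁ σ) - DF (Y₂ σ))‖ := by
          rw [adjZ, adjZ, intervalIntegral.integral_sub hi₁ hi₂]
          congr 1
          abel
      _ ≤ ‖DFT (Y₁ T) - DFT (Y₂ T)‖ + ‖∫ σ in s..T, (DF (Y₁ σ) - DF (Y₂ σ))‖ :=
          norm_add_le _ _
      _ ≤ c * M + c * M * |T - s| := add_le_add hDFTb hint
      _ ≤ c * M + c * M * T := by nlinarith
      _ = c * (1 + T) * M := by ring
  -- derivative bound on the difference of paths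
  set C := c * (1 + T) * M / lam with hC
  have hC0 : 0 ≤ C := div_nonneg (by positivity) hlam.le
  have hderiv : ∀ s ∈ Icc t T,
      HasDerivWithinAt (fun σ => Y₁ σ - Y₂ σ)
        (-(1 / lam) • (adjZ DF DFT T Y₁ s - adjZ DF DFT T Y₂ s)) (Icc t T) s := by
    intro s hs
    have := (hY₁.2.2 s hs).sub (hY₂.2.2 s hs)
    simpa [smul_sub, Pi.sub_def] using this
  have hdb : ∀ s ∈ Icc t T,
      ‖-(1 / lam) • (adjZ DF DFT T Y₁ s - adjZ DF DFT T Y₂ s)‖ ≤ C := by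
    intro s hs
    rw [norm_smul, norm_neg, norm_div, norm_one, Real.norm_eq_abs,
      abs_of_pos hlam]
    have heq : 1 / lam * ‖adjZ DF DFT T Y₁ s - adjZ DF DFT T Y₂ s‖
        = ‖adjZ DF DFT T Y₁ s - adjZ DF DFT T Y₂ s‖ / lam := by ring
    rw [heq, hC]
    gcongr
    exact hZb s hs
  have hMVT := (convex_Icc t T).norm_image_sub_le_of_norm_hasDerivWithin_le
    hderiv hdb ⟨le_rfl, htT⟩ hs₀
  have hWt : Y₁ t - Y₂ t = X₁ - X₂ := by rw [hY₁.2.1, hY₂.2.1]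
  have hs₀t : ‖(s₀ : ℝ) - t‖ ≤ T := by
    rw [Real.norm_eq_abs, abs_of_nonneg (by linarith [hs₀.1])]
    linarith [hs₀.2, ht0]
  rw [hWt] at hMVT
  have hMle : M ≤ ‖X₁ - X₂‖ + C * T := by
    calc M = ‖(Y₁ s₀ - Y₂ s₀)‖ := rfl
      _ ≤ ‖X₁ - X₂‖ + ‖(Y₁ s₀ - Y₂ s₀) - (X₁ - X₂)‖ := by
          have := norm_add_le (X₁ - X₂) ((Y₁ s₀ - Y₂ s₀) - (X₁ - X₂))
          simpa using this
      _ ≤ ‖X₁ - X₂‖ + C * ‖s₀ - t‖ := add_le_add le_rfl hMVT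
      _ ≤ ‖X₁ - X₂‖ + C * T := by nlinarith
  -- solve for M
  have hMfinal : M * (lam - c * T * (1 + T)) ≤ lam * ‖X₁ - X₂‖ := by
    have : M * lam ≤ lam * ‖X₁ - X₂‖ + c * (1 + T) * M * T := by
      have := mul_le_mul_of_nonneg_right hMle hlam.le
      rw [hC] at this
      calc M * lam ≤ (‖X₁ - X₂‖ + c * (1 + T) * M / lam * T) * lam := this
        _ = lam * ‖X₁ - X₂‖ + c * (1 + T) * M * T := by
            field_simp
    nlinarith
  intro s hs
  have hden : 0 < lam - c * T * (T + 1) := by nlinarith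
  calc ‖adjZ DF DFT T Y₁ s - adjZ DF DFT T Y₂ s‖ ≤ c * (1 + T) * M := hZb s hs
    _ ≤ c * (T + 1) * lam * ‖X₁ - X₂‖ / (lam - c * T * (T + 1)) := by
        rw [le_div_iff₀ hden]
        nlinarith [mul_le_mul_of_nonneg_left hMfinal
          (by positivity : (0:ℝ) ≤ c * (1 + T))]
end
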